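/- arXiv:1304.6233 — 7 statements merged into one kernel-verified Lean document; each statement's English description precedes it below -/
import Mathlib

section
/- Let A = L X be feasible, i.e., Aᵀ lies in the column space of Xᵀ. Then the minimum of rank(L) over all L satisfying A = L X equals rank(A), and the set of minimizers is exactly { L = A X† + U_A S : S is any matrix with S U_X = 0 }, where U_A Σ_A V_Aᵀ is the skinny SVD of A. -/
open Matrix

/-- The nuclear norm of a real matrix: the sum of its singular values,
i.e. the sum of the square roots of the eigenvalues of `Aᵀ * A`. -/
noncomputable def nuclearNorm {m n : Type*} [Fintype m] [Fintype n] [DecidableEq n]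
    (A : Matrix m n ℝ) : ℝ :=
  ∑ i, Real.sqrt ((Matrix.isHermitian_conjTranspose_mul_self A).eigenvalues i)

/-- `P` is the Moore–Penrose pseudo-inverse of `X`. -/
def IsMoorePenroseInv {m n : Type*} [Fintype m] [Fintype n]
    (X : Matrix m n ℝ) (P : Matrix n m ℝ) : Prop :=
  X * P * X = X ∧ P * X * P = P ∧ (X * P)ᵀ = X * P ∧ (P * X)ᵀ = P * X

/-- `(U, σ, V)` is a skinny SVD of `X`: `U` and `V` have orthonormal columns,
`σ` lists the (positive) nonzero singular values, `X = U * diagonal σ * Vᵀ`,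
and the number of columns of `U` and `V` is `rank X`. -/
def IsSkinnySVD {m n r : ℕ} (X : Matrix (Fin m) (Fin n) ℝ)
    (U : Matrix (Fin m) (Fin r) ℝ) (σ : Fin r → ℝ) (V : Matrix (Fin n) (Fin r) ℝ) : Prop :=
  Uᵀ * U = 1 ∧ Vᵀ * V = 1 ∧ (∀ i, 0 < σ i) ∧
    X = U * Matrix.diagonal σ * Vᵀ ∧ r = X.rank

/-- Range of a product is contained in the range of the left factor. -/
lemma range_mul_le_left {p m k : ℕ} (B : Matrix (Fin p) (Fin m) ℝ)
    (C : Matrix (Fin m) (Fin k) ℝ) :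
    LinearMap.range (B * C).mulVecLin ≤ LinearMap.range B.mulVecLin := by
  rw [Matrix.mulVecLin_mul]
  exact LinearMap.range_comp_le_range _ _

/-- If the columns of `M` lie in the column space of `U` (with `Uᵀ U = 1`),
then `U Uᵀ M = M`. -/
lemma proj_eq_self {p rA k : ℕ} (U : Matrix (Fin p) (Fin rA) ℝ)
    (hU : Uᵀ * U = 1) (M : Matrix (Fin p) (Fin k) ℝ)
    (h : LinearMap.range M.mulVecLin ≤ LinearMap.range U.mulVecLin) :
    U * (Uᵀ * M) = M := by
  ext i j
  have hmem : M *ᵥ Pi.single j 1 ∈ LinearMap.range U.mulVecLin :=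
    h ⟨Pi.single j 1, rfl⟩
  obtain ⟨w, hw⟩ := hmem
  have hw' : U *ᵥ w = M *ᵥ Pi.single j 1 := hw
  have hinner : Uᵀ *ᵥ (U *ᵥ w) = w := by
    rw [Matrix.mulVec_mulVec, hU, Matrix.one_mulVec]
  have key : (U * (Uᵀ * M)) *ᵥ Pi.single j 1 = M *ᵥ Pi.single j 1 := by
    rw [← Matrix.mulVec_mulVec, ← Matrix.mulVec_mulVec, ← hw', hinner]
  have := congrFun key i
  simpa using this

/-- The minimum of `rank L` over all `L` with `A = L X` equals `rank A`, and the
minimizers are exactly `L = A X† + U_A S` with `S U_X = 0`. -/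
theorem stmt1 {p m n r rA : ℕ} (X : Matrix (Fin m) (Fin n) ℝ) (hX : X ≠ 0)
    (A : Matrix (Fin p) (Fin n) ℝ)
    (P : Matrix (Fin n) (Fin m) ℝ) (hP : IsMoorePenroseInv X P)
    (UX : Matrix (Fin m) (Fin r) ℝ) (σX : Fin r → ℝ) (VX : Matrix (Fin n) (Fin r) ℝ)
    (hXsvd : IsSkinnySVD X UX σX VX)
    (UA : Matrix (Fin p) (Fin rA) ℝ) (σA : Fin rA → ℝ) (VA : Matrix (Fin n) (Fin rA) ℝ)
    (hAsvd : IsSkinnySVD A UA σA VA)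
    (hfeas : ∃ L : Matrix (Fin p) (Fin m) ℝ, A = L * X) :
    IsLeast {k : ℕ | ∃ L : Matrix (Fin p) (Fin m) ℝ, A = L * X ∧ L.rank = k} A.rank ∧
    ∀ L : Matrix (Fin p) (Fin m) ℝ,
      (A = L * X ∧ L.rank = A.rank) ↔
        ∃ S : Matrix (Fin rA) (Fin m) ℝ, S * UX = 0 ∧ L = A * P + UA * S := by
  obtain ⟨L₀, hL₀⟩ := hfeas
  obtain ⟨hXPX, -, -, -⟩ := hP
  obtain ⟨hUX, hVX, hσX, hXeq, -⟩ := hXsvd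
  obtain ⟨hUA, hVA, hσA, hAeq, hrA⟩ := hAsvd
  -- A P X = A
  have hAPX : A * P * X = A := by
    rw [hL₀, Matrix.mul_assoc, Matrix.mul_assoc, ← Matrix.mul_assoc X P X, hXPX]
  -- lower bound on rank
  have hlow : ∀ L : Matrix (Fin p) (Fin m) ℝ, A = L * X → A.rank ≤ L.rank := by
    intro L h
    rw [h]; exact Matrix.rank_mul_le_left L X
  -- rank (A*P) = rank A
  have hAPrank : (A * P).rank = A.rank := by
    refine le_antisymm (Matrix.rank_mul_le_left A P) ?_
    conv_lhs => rw [← hAPX]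
    exact Matrix.rank_mul_le_left (A * P) X
  constructor
  · exact ⟨⟨A * P, hAPX.symm, hAPrank⟩, fun k ⟨L, hL, hLr⟩ => hLr ▸ hlow L hL⟩
  · intro L
    constructor
    · rintro ⟨hALX, hrank⟩
      set M : Matrix (Fin p) (Fin m) ℝ := L - A * P with hM
      have hMX : M * X = 0 := by
        rw [hM, Matrix.sub_mul, ← hALX, hAPX, sub_self]
      -- M UX = 0
      have hMUX : M * UX = 0 := by
        have h1 : M * UX * Matrix.diagonal σX * VXᵀ = 0 := by
          have := hMX
          rw [hXeq, ← Matrix.mul_assoc, ← Matrix.mul_assoc] at this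
          exact this
        have h2 : M * UX * Matrix.diagonal σX = 0 := by
          have := congrArg (· * VX) h1
          simp only [Matrix.zero_mul] at this
          rwa [Matrix.mul_assoc (M * UX * Matrix.diagonal σX), hVX, Matrix.mul_one] at this
        have h3 : M * UX * (Matrix.diagonal σX * Matrix.diagonal fun i => (σX i)⁻¹) = 0 := by
          rw [← Matrix.mul_assoc, h2, Matrix.zero_mul]
        rwa [Matrix.diagonal_mul_diagonal,
          show (fun i => σX i * (σX i)⁻¹) = fun _ => (1 : ℝ) from
            funext fun i => mul_inv_cancel₀ (hσX i).ne', Matrix.diagonal_one,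
          Matrix.mul_one] at h3
      -- range L = range A
      have hAleL : LinearMap.range A.mulVecLin ≤ LinearMap.range L.mulVecLin := by
        rw [hALX]; exact range_mul_le_left L X
      have hLA : LinearMap.range A.mulVecLin = LinearMap.range L.mulVecLin :=
        Submodule.eq_of_le_of_finrank_le hAleL (le_of_eq hrank)
      -- range A ≤ range UA
      have hAUA : LinearMap.range A.mulVecLin ≤ LinearMap.range UA.mulVecLin := by
        have : A = UA * (Matrix.diagonal σA * VAᵀ) := by rw [← Matrix.mul_assoc]; exact hAeq
        rw [this]; exact range_mul_le_left UA _
      -- range M ≤ range UA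
      have hMUA : LinearMap.range M.mulVecLin ≤ LinearMap.range UA.mulVecLin := by
        rintro v ⟨w, rfl⟩
        have hLw : L *ᵥ w ∈ LinearMap.range UA.mulVecLin := by
          apply hAUA
          rw [hLA]
          exact ⟨w, rfl⟩
        have hAPw : (A * P) *ᵥ w ∈ LinearMap.range UA.mulVecLin := by
          apply hAUA
          rw [← Matrix.mulVec_mulVec]
          exact ⟨P *ᵥ w, rfl⟩
        have : M.mulVecLin w = L *ᵥ w - (A * P) *ᵥ w := by
          simp [hM, Matrix.mulVecLin_apply, Matrix.sub_mulVec]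
        rw [this]
        exact Submodule.sub_mem _ hLw hAPw
      have hproj : UA * (UAᵀ * M) = M := proj_eq_self UA hUA M hMUA
      refine ⟨UAᵀ * M, ?_, ?_⟩
      · rw [Matrix.mul_assoc, hMUX, Matrix.mul_zero]
      · rw [hproj, hM]; abel
    · rintro ⟨S, hSU, rfl⟩
      have hSX : S * X = 0 := by
        rw [hXeq, ← Matrix.mul_assoc, ← Matrix.mul_assoc, hSU, Matrix.zero_mul,
          Matrix.zero_mul]
      have hLX : A = (A * P + UA * S) * X := by
        rw [Matrix.add_mul, hAPX, Matrix.mul_assoc, hSX, Matrix.mul_zero, add_zero]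
      refine ⟨hLX, le_antisymm ?_ (hlow _ hLX)⟩
      have hfac : A * P + UA * S = UA * (Matrix.diagonal σA * VAᵀ * P + S) := by
        conv_lhs => rw [hAeq]
        rw [Matrix.mul_add, Matrix.mul_assoc, Matrix.mul_assoc, Matrix.mul_assoc]
      calc (A * P + UA * S).rank ≤ UA.rank := by rw [hfac]; exact Matrix.rank_mul_le_left _ _
        _ ≤ rA := Matrix.rank_le_width UA
        _ = A.rank := hrA
end

section
/- Let W̃ be a square matrix of size rank(X) and let L* be any optimal solution to the subproblem: minimize rank(L) subject to X − X V_X W̃ V_Xᵀ = L X. Then (V_X W̃ V_Xᵀ, L*) is an optimal solution to the original LatLRR problem (minimize rank(Z) + rank(L) subject to X = X Z + L X) if and only if W̃ is idempotent (W̃² = W̃). -/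
open Matrix Module

lemma myrank_add_le {m n : Type*} [Fintype m] [Fintype n]
    (A B : Matrix m n ℝ) : (A + B).rank ≤ A.rank + B.rank := by
  have hle : LinearMap.range (A + B).mulVecLin ≤
      LinearMap.range A.mulVecLin ⊔ LinearMap.range B.mulVecLin := by
    rintro x ⟨y, rfl⟩
    exact Submodule.mem_sup.2 ⟨A.mulVecLin y, ⟨y, rfl⟩, B.mulVecLin y, ⟨y, rfl⟩, by
      simp [Matrix.mulVecLin_apply, Matrix.add_mulVec]⟩
  calc (A + B).rank ≤ finrank ℝ ↥(LinearMap.range A.mulVecLin ⊔ LinearMap.range B.mulVecLin) :=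
        Submodule.finrank_mono hle
    _ ≤ A.rank + B.rank := Submodule.finrank_add_le_finrank_add_finrank _ _

lemma idem_iff_rank {r : ℕ} (W : Matrix (Fin r) (Fin r) ℝ) :
    W * W = W ↔ W.rank + (1 - W).rank ≤ r := by
  have hrn1 := LinearMap.finrank_range_add_finrank_ker W.mulVecLin
  have hrn2 := LinearMap.finrank_range_add_finrank_ker (1 - W).mulVecLin
  rw [Module.finrank_fintype_fun_eq_card, Fintype.card_fin] at hrn1 hrn2
  constructor
  · intro h
    have hle : LinearMap.range (1 - W).mulVecLin ≤ LinearMap.ker W.mulVecLin := by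
      rintro x ⟨y, rfl⟩
      have : W * (1 - W) = 0 := by rw [mul_sub, mul_one, h, sub_self]
      simp only [LinearMap.mem_ker, Matrix.mulVecLin_apply, Matrix.mulVec_mulVec, this, Matrix.zero_mulVec]
    have hm := Submodule.finrank_mono hle
    have e1 : W.rank = finrank ℝ ↥(LinearMap.range W.mulVecLin) := rfl
    have e2 : (1 - W).rank = finrank ℝ ↥(LinearMap.range (1 - W).mulVecLin) := rfl
    omega
  · intro h
    have hinf : LinearMap.ker W.mulVecLin ⊓ LinearMap.ker (1 - W).mulVecLin = ⊥ := by
      rw [Submodule.eq_bot_iff]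
      intro x hx12
      obtain ⟨h1, h2⟩ := Submodule.mem_inf.1 hx12
      rw [LinearMap.mem_ker, Matrix.mulVecLin_apply] at h1 h2
      rw [Matrix.sub_mulVec, Matrix.one_mulVec, h1, sub_zero] at h2
      exact h2
    have hsum := Submodule.finrank_sup_add_finrank_inf_eq
      (LinearMap.ker W.mulVecLin) (LinearMap.ker (1 - W).mulVecLin)
    rw [hinf, finrank_bot, add_zero] at hsum
    have htop : LinearMap.ker W.mulVecLin ⊔ LinearMap.ker (1 - W).mulVecLin = ⊤ := by
      apply Submodule.eq_top_of_finrank_eq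
      have hle := Submodule.finrank_le (LinearMap.ker W.mulVecLin ⊔ LinearMap.ker (1 - W).mulVecLin)
      rw [Module.finrank_fintype_fun_eq_card, Fintype.card_fin] at hle ⊢
      have e1 : W.rank = finrank ℝ ↥(LinearMap.range W.mulVecLin) := rfl
      have e2 : (1 - W).rank = finrank ℝ ↥(LinearMap.range (1 - W).mulVecLin) := rfl
      omega
    ext i j
    have hx : (Pi.single j 1 : Fin r → ℝ) ∈
        LinearMap.ker W.mulVecLin ⊔ LinearMap.ker (1 - W).mulVecLin := htop ▸ Submodule.mem_top
    obtain ⟨a, ha, b, hb, hab⟩ := Submodule.mem_sup.1 hx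
    rw [LinearMap.mem_ker, Matrix.mulVecLin_apply] at ha hb
    rw [Matrix.sub_mulVec, Matrix.one_mulVec, sub_eq_zero] at hb
    have hWx : W.mulVec (Pi.single j 1) = b := by
      rw [← hab, Matrix.mulVec_add, ha, ← hb, zero_add]
    have h1 : (W * W).mulVec (Pi.single j 1) = W.mulVec (Pi.single j 1) := by
      rw [← Matrix.mulVec_mulVec, hWx, ← hb]
    have := congrFun h1 i
    simpa using this

/-- Let `L*` be optimal for `min rank L` s.t. `X − X V_X W̃ V_Xᵀ = L X`. Then
`(V_X W̃ V_Xᵀ, L*)` is optimal for the original LatLRR problem iff `W̃` is idempotent. -/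
theorem stmt5 {m n r : ℕ} (X : Matrix (Fin m) (Fin n) ℝ) (hX : X ≠ 0)
    (UX : Matrix (Fin m) (Fin r) ℝ) (σX : Fin r → ℝ) (VX : Matrix (Fin n) (Fin r) ℝ)
    (hsvd : IsSkinnySVD X UX σX VX)
    (W : Matrix (Fin r) (Fin r) ℝ)
    (Ls : Matrix (Fin m) (Fin m) ℝ)
    (hLfeas : X - X * (VX * W * VXᵀ) = Ls * X)
    (hLopt : ∀ L : Matrix (Fin m) (Fin m) ℝ,
      X - X * (VX * W * VXᵀ) = L * X → Ls.rank ≤ L.rank) :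
    (X = X * (VX * W * VXᵀ) + Ls * X ∧
      ∀ (Z : Matrix (Fin n) (Fin n) ℝ) (L : Matrix (Fin m) (Fin m) ℝ),
        X = X * Z + L * X → (VX * W * VXᵀ).rank + Ls.rank ≤ Z.rank + L.rank)
    ↔ W * W = W := by
  obtain ⟨hU, hV, hσ, hXdef, hrank⟩ := hsvd
  set D : Matrix (Fin r) (Fin r) ℝ := Matrix.diagonal σX with hDdef
  set Dinv : Matrix (Fin r) (Fin r) ℝ := Matrix.diagonal (fun i => (σX i)⁻¹) with hDinvdef
  have hDDinv : D * Dinv = 1 := by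
    rw [hDdef, hDinvdef, Matrix.diagonal_mul_diagonal,
      show (fun i => σX i * (σX i)⁻¹) = fun _ => (1 : ℝ) from
        funext fun i => mul_inv_cancel₀ (hσ i).ne', Matrix.diagonal_one]
  have hDinvD : Dinv * D = 1 := by
    rw [hDdef, hDinvdef, Matrix.diagonal_mul_diagonal,
      show (fun i => (σX i)⁻¹ * σX i) = fun _ => (1 : ℝ) from
        funext fun i => inv_mul_cancel₀ (hσ i).ne', Matrix.diagonal_one]
  have hUc : ∀ {k : Type} [Fintype k] (A : Matrix (Fin r) k ℝ), UXᵀ * (UX * A) = A :=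
    fun A => by rw [← Matrix.mul_assoc, hU, Matrix.one_mul]
  have hVc : ∀ {k : Type} [Fintype k] (A : Matrix (Fin r) k ℝ), VXᵀ * (VX * A) = A :=
    fun A => by rw [← Matrix.mul_assoc, hV, Matrix.one_mul]
  have hDc : ∀ {k : Type} [Fintype k] (A : Matrix (Fin r) k ℝ), D * (Dinv * A) = A :=
    fun A => by rw [← Matrix.mul_assoc, hDDinv, Matrix.one_mul]
  have hDic : ∀ {k : Type} [Fintype k] (A : Matrix (Fin r) k ℝ), Dinv * (D * A) = A :=
    fun A => by rw [← Matrix.mul_assoc, hDinvD, Matrix.one_mul]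
  -- rank (VX * W * VXᵀ) = W.rank
  have hrkVWV : (VX * W * VXᵀ).rank = W.rank := by
    apply le_antisymm
    · exact le_trans (Matrix.rank_mul_le_left _ _) (Matrix.rank_mul_le_right _ _)
    · have e : VXᵀ * (VX * W * VXᵀ) * VX = W := by
        simp only [Matrix.mul_assoc, hVc, hV, Matrix.mul_one]
      calc W.rank = (VXᵀ * (VX * W * VXᵀ) * VX).rank := by rw [e]
        _ ≤ (VXᵀ * (VX * W * VXᵀ)).rank := Matrix.rank_mul_le_left _ _
        _ ≤ (VX * W * VXᵀ).rank := Matrix.rank_mul_le_right _ _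
  -- Ls * X = UX * (D * (1 - W)) * VXᵀ
  have hLsX : Ls * X = UX * (D * (1 - W)) * VXᵀ := by
    rw [← hLfeas, hXdef]
    simp only [Matrix.mul_sub, Matrix.sub_mul, Matrix.mul_one, Matrix.one_mul,
      Matrix.mul_assoc, hVc]
  -- Ls.rank ≥ (1-W).rank
  have hLs_ge : (1 - W).rank ≤ Ls.rank := by
    have e : Dinv * (UXᵀ * (Ls * X) * VX) = 1 - W := by
      rw [hLsX]
      simp only [Matrix.mul_assoc, hV, Matrix.mul_one, hUc, hDic]
    calc (1 - W).rank = (Dinv * (UXᵀ * (Ls * X) * VX)).rank := by rw [e]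
      _ ≤ (UXᵀ * (Ls * X) * VX).rank := Matrix.rank_mul_le_right _ _
      _ ≤ (UXᵀ * (Ls * X)).rank := Matrix.rank_mul_le_left _ _
      _ ≤ (Ls * X).rank := Matrix.rank_mul_le_right _ _
      _ ≤ Ls.rank := Matrix.rank_mul_le_left _ _
  -- Ls.rank ≤ (1-W).rank via the feasible L0
  have hLs_le : Ls.rank ≤ (1 - W).rank := by
    set L0 : Matrix (Fin m) (Fin m) ℝ := UX * (D * (1 - W) * Dinv) * UXᵀ with hL0
    have hfeas0 : X - X * (VX * W * VXᵀ) = L0 * X := by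
      rw [hXdef, hL0]
      simp only [Matrix.mul_sub, Matrix.sub_mul, Matrix.mul_one, Matrix.one_mul,
        Matrix.mul_assoc, hVc, hUc, hDc, hDic]
    calc Ls.rank ≤ L0.rank := hLopt L0 hfeas0
      _ ≤ (D * (1 - W) * Dinv).rank :=
          le_trans (Matrix.rank_mul_le_left _ _) (Matrix.rank_mul_le_right _ _)
      _ ≤ (D * (1 - W)).rank := Matrix.rank_mul_le_left _ _
      _ ≤ (1 - W).rank := Matrix.rank_mul_le_right _ _
  constructor
  · rintro ⟨-, hopt⟩
    rw [idem_iff_rank]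
    have hfeasZ : X = X * (VX * VXᵀ) + (0 : Matrix (Fin m) (Fin m) ℝ) * X := by
      rw [Matrix.zero_mul, add_zero, hXdef]
      simp only [Matrix.mul_assoc, hVc]
    have h1 := hopt (VX * VXᵀ) 0 hfeasZ
    rw [Matrix.rank_zero, add_zero, hrkVWV] at h1
    have h2 : (VX * VXᵀ).rank ≤ r := le_trans (Matrix.rank_mul_le_left _ _)
      (le_trans (Matrix.rank_le_card_width _) (by simp))
    omega
  · intro hW
    have hsum : W.rank + (1 - W).rank ≤ r := (idem_iff_rank W).mp hW
    constructor
    · rw [← hLfeas]; abel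
    · intro Z L hfeas
      have hlow : r ≤ Z.rank + L.rank := by
        calc r = X.rank := hrank
          _ = (X * Z + L * X).rank := by rw [← hfeas]
          _ ≤ (X * Z).rank + (L * X).rank := myrank_add_le _ _
          _ ≤ Z.rank + L.rank := add_le_add (Matrix.rank_mul_le_right _ _)
              (Matrix.rank_mul_le_left _ _)
      rw [hrkVWV]
      omega
end

section
/- The set of optimal solutions (Z*, L*) to the original LatLRR problem (minimize rank(Z) + rank(L) subject to X = X Z + L X) is exactly the set of pairs Z* = V_X W̃ V_Xᵀ + S₁ W̃ V_Xᵀ and L* = U_X Σ_X (I − W̃) Σ_X⁻¹ U_Xᵀ + U_X Σ_X (I − W̃) S₂, where W̃ ranges over all idempotent matrices of size rank(X), and S₁, S₂ are any matrices satisfying V_Xᵀ S₁ = 0, S₂ U_X = 0, rank(S₁) ≤ rank(W̃), and rank(S₂) ≤ rank(I − W̃). -/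
open Matrix

lemma myRankAddLe {a b : ℕ} (A B : Matrix (Fin a) (Fin b) ℝ) :
    (A + B).rank ≤ A.rank + B.rank := by
  rw [Matrix.rank, Matrix.rank, Matrix.rank, Matrix.mulVecLin_add]
  refine le_trans (Submodule.finrank_mono ?_)
    (Submodule.finrank_add_le_finrank_add_finrank _ _)
  rintro x ⟨y, rfl⟩
  exact Submodule.add_mem_sup (LinearMap.mem_range_self _ y) (LinearMap.mem_range_self _ y)

lemma myRangeMulLe {a b c : ℕ} (A : Matrix (Fin a) (Fin b) ℝ) (B : Matrix (Fin b) (Fin c) ℝ) :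
    LinearMap.range (A * B).mulVecLin ≤ LinearMap.range A.mulVecLin := by
  rw [Matrix.mulVecLin_mul]
  exact LinearMap.range_comp_le_range _ _

lemma myFactor {a b c : ℕ} (D : Matrix (Fin a) (Fin c) ℝ) (M : Matrix (Fin a) (Fin b) ℝ)
    (h : LinearMap.range D.mulVecLin ≤ LinearMap.range M.mulVecLin) :
    ∃ T : Matrix (Fin b) (Fin c) ℝ, D = M * T := by
  have hc : ∀ j : Fin c, ∃ t : Fin b → ℝ, M.mulVec t = fun i => D i j := by
    intro j
    have : (fun i => D i j) ∈ LinearMap.range D.mulVecLin :=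
      ⟨Pi.single j 1, by simp [Matrix.mulVecLin_apply]; rfl⟩
    exact h this
  choose t ht using hc
  refine ⟨Matrix.of fun i j => t j i, ?_⟩
  ext i j
  have := congrFun (ht j) i
  simpa [Matrix.mul_apply, Matrix.mulVec, dotProduct] using this.symm

lemma myRank3 {a b c d : ℕ} (P : Matrix (Fin a) (Fin b) ℝ) (B : Matrix (Fin b) (Fin c) ℝ)
    (Q : Matrix (Fin c) (Fin d) ℝ) : (P * B * Q).rank ≤ B.rank :=
  le_trans (Matrix.rank_mul_le_left _ _) (Matrix.rank_mul_le_right _ _)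

/-- Complete solutions to the original LatLRR problem: `(Z, L)` is optimal iff
`Z = V_X W̃ V_Xᵀ + S₁ W̃ V_Xᵀ` and `L = U_X Σ_X (I − W̃) Σ_X⁻¹ U_Xᵀ + U_X Σ_X (I − W̃) S₂`
for some idempotent `W̃` and matrices `S₁, S₂` with `V_Xᵀ S₁ = 0`, `S₂ U_X = 0`,
`rank S₁ ≤ rank W̃`, `rank S₂ ≤ rank (I − W̃)`. -/
theorem stmt6 {m n r : ℕ} (X : Matrix (Fin m) (Fin n) ℝ) (hX : X ≠ 0)
    (UX : Matrix (Fin m) (Fin r) ℝ) (σX : Fin r → ℝ) (VX : Matrix (Fin n) (Fin r) ℝ)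
    (hsvd : IsSkinnySVD X UX σX VX)
    (Z : Matrix (Fin n) (Fin n) ℝ) (L : Matrix (Fin m) (Fin m) ℝ) :
    (X = X * Z + L * X ∧
      ∀ (Z' : Matrix (Fin n) (Fin n) ℝ) (L' : Matrix (Fin m) (Fin m) ℝ),
        X = X * Z' + L' * X → Z.rank + L.rank ≤ Z'.rank + L'.rank)
    ↔ ∃ (W : Matrix (Fin r) (Fin r) ℝ) (S₁ : Matrix (Fin n) (Fin r) ℝ)
        (S₂ : Matrix (Fin r) (Fin m) ℝ),
        W * W = W ∧ VXᵀ * S₁ = 0 ∧ S₂ * UX = 0 ∧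
        S₁.rank ≤ W.rank ∧ S₂.rank ≤ (1 - W).rank ∧
        Z = VX * W * VXᵀ + S₁ * W * VXᵀ ∧
        L = UX * Matrix.diagonal σX * (1 - W) * (Matrix.diagonal σX)⁻¹ * UXᵀ +
            UX * Matrix.diagonal σX * (1 - W) * S₂ := by
  obtain ⟨hU, hV, hσ, hXe, hr⟩ := hsvd
  set Sg := Matrix.diagonal σX with hSg
  have hdet : IsUnit Sg.det := by
    rw [hSg, Matrix.det_diagonal, isUnit_iff_ne_zero]
    exact (Finset.prod_pos fun i _ => hσ i).ne'
  have hSgi : Sg⁻¹ * Sg = 1 := Matrix.nonsing_inv_mul _ hdet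
  have hSgi' : Sg * Sg⁻¹ = 1 := Matrix.mul_nonsing_inv _ hdet
  have hUU : ∀ {k : ℕ} (A : Matrix (Fin r) (Fin k) ℝ), UXᵀ * (UX * A) = A := by
    intro k A; rw [← Matrix.mul_assoc, hU, Matrix.one_mul]
  have hVV : ∀ {k : ℕ} (A : Matrix (Fin r) (Fin k) ℝ), VXᵀ * (VX * A) = A := by
    intro k A; rw [← Matrix.mul_assoc, hV, Matrix.one_mul]
  have hSS : ∀ {k : ℕ} (A : Matrix (Fin r) (Fin k) ℝ), Sg⁻¹ * (Sg * A) = A := by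
    intro k A; rw [← Matrix.mul_assoc, hSgi, Matrix.one_mul]
  have hSS' : ∀ {k : ℕ} (A : Matrix (Fin r) (Fin k) ℝ), Sg * (Sg⁻¹ * A) = A := by
    intro k A; rw [← Matrix.mul_assoc, hSgi', Matrix.one_mul]
  -- lower bound for any feasible pair
  have hlow : ∀ (Z' : Matrix (Fin n) (Fin n) ℝ) (L' : Matrix (Fin m) (Fin m) ℝ),
      X = X * Z' + L' * X → r ≤ Z'.rank + L'.rank := by
    intro Z' L' hfe
    calc r = X.rank := hr
      _ = (X * Z' + L' * X).rank := by rw [← hfe]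
      _ ≤ (X * Z').rank + (L' * X).rank := myRankAddLe _ _
      _ ≤ Z'.rank + L'.rank :=
        add_le_add (Matrix.rank_mul_le_right _ _) (Matrix.rank_mul_le_left _ _)
  constructor
  · rintro ⟨hfeas, hopt⟩
    -- the pair (VX*VXᵀ, 0) is feasible, giving the bound rank Z + rank L ≤ r
    have hXVV : X * (VX * VXᵀ) = X := by
      rw [hXe]; simp only [Matrix.mul_assoc, hVV]
    have hVVfeas : X = X * (VX * VXᵀ) + (0 : Matrix (Fin m) (Fin m) ℝ) * X := by
      rw [Matrix.zero_mul, add_zero, hXVV]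
    have hZL : Z.rank + L.rank ≤ r := by
      have h1 := hopt (VX * VXᵀ) 0 hVVfeas
      have h2 : (VX * VXᵀ).rank ≤ r := by
        refine le_trans (Matrix.rank_mul_le_left _ _) ?_
        simpa using VX.rank_le_card_width
      have h3 : (0 : Matrix (Fin m) (Fin m) ℝ).rank = 0 := Matrix.rank_zero
      omega
    obtain ⟨W, hWdef⟩ : ∃ W : Matrix (Fin r) (Fin r) ℝ, W = VXᵀ * Z * VX := ⟨_, rfl⟩
    have hXZsub : X * Z = X - L * X := eq_sub_of_add_eq hfeas.symm
    have hLXsub : L * X = X - X * Z := eq_sub_of_add_eq' hfeas.symm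
    have hXZVV : X * Z * (VX * VXᵀ) = X * Z := by
      rw [hXZsub, Matrix.sub_mul, hXVV, Matrix.mul_assoc, hXVV]
    have hXZ : X * Z = UX * Sg * W * VXᵀ := by
      rw [hWdef]
      conv_lhs => rw [← hXZVV]
      rw [hXe]
      simp only [Matrix.mul_assoc]
    have hLX : L * X = UX * Sg * (1 - W) * VXᵀ := by
      rw [hLXsub, hXZ]
      nth_rewrite 1 [hXe]
      rw [Matrix.mul_sub, Matrix.sub_mul, Matrix.mul_one]
    have hVZ : VXᵀ * Z = W * VXᵀ := by
      have h1 : Sg⁻¹ * (UXᵀ * (X * Z)) = Sg⁻¹ * (UXᵀ * (UX * Sg * W * VXᵀ)) := by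
        rw [hXZ]
      rw [hXe] at h1
      simp only [Matrix.mul_assoc, hUU, hSS] at h1
      exact h1
    have hLU : L * UX = UX * Sg * (1 - W) * Sg⁻¹ := by
      have h1 : L * X * (VX * Sg⁻¹) = UX * Sg * (1 - W) * VXᵀ * (VX * Sg⁻¹) := by
        rw [hLX]
      rw [hXe] at h1
      simp only [Matrix.mul_assoc, hVV, hSgi', Matrix.mul_one] at h1
      simp only [Matrix.mul_assoc]
      exact h1
    have hrWZ : W.rank ≤ Z.rank := by
      rw [hWdef]; exact myRank3 _ _ _
    have h1Wfac : (1 - W) = Sg⁻¹ * UXᵀ * (L * UX) * Sg := by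
      rw [hLU]
      simp only [Matrix.mul_assoc, hUU, hSS, hSgi, Matrix.mul_one]
    have hr1WL : (1 - W).rank ≤ L.rank := by
      rw [h1Wfac]
      exact le_trans (myRank3 _ _ _) (Matrix.rank_mul_le_left _ _)
    have hrsum : r ≤ W.rank + (1 - W).rank := by
      have h := myRankAddLe W (1 - W)
      have e : W + (1 - W) = (1 : Matrix (Fin r) (Fin r) ℝ) := by abel
      rw [e, Matrix.rank_one, Fintype.card_fin] at h
      exact h
    have eZ : W.rank = Z.rank := by omega
    have eL : (1 - W).rank = L.rank := by omega
    have hsumeq : W.rank + (1 - W).rank = r := by omega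
    -- W is idempotent
    have hker : LinearMap.ker W.mulVecLin ≤ LinearMap.range (1 - W).mulVecLin := by
      intro x hx
      refine ⟨x, ?_⟩
      rw [LinearMap.mem_ker, Matrix.mulVecLin_apply] at hx
      rw [Matrix.mulVecLin_apply, Matrix.sub_mulVec, Matrix.one_mulVec, hx, sub_zero]
    have hkr : LinearMap.ker W.mulVecLin = LinearMap.range (1 - W).mulVecLin := by
      refine Submodule.eq_of_le_of_finrank_le hker ?_
      have hrn := LinearMap.finrank_range_add_finrank_ker W.mulVecLin
      rw [Module.finrank_pi, Fintype.card_fin] at hrn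
      have e1 : Module.finrank ℝ (LinearMap.range W.mulVecLin) = W.rank := rfl
      have e2 : Module.finrank ℝ (LinearMap.range (1 - W).mulVecLin) = (1 - W).rank := rfl
      rw [e1] at hrn
      rw [e2]
      omega
    have hW0 : W * (1 - W) = 0 := by
      ext i j
      have hmem : (1 - W).mulVecLin (Pi.single j 1) ∈ LinearMap.range (1 - W).mulVecLin :=
        LinearMap.mem_range_self _ _
      rw [← hkr, LinearMap.mem_ker] at hmem
      simp only [Matrix.mulVecLin_apply, Matrix.mulVec_mulVec] at hmem
      have h4 := congrFun hmem i
      simpa using h4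
    have hWW : W * W = W := by
      have h := hW0
      rw [Matrix.mul_sub, Matrix.mul_one, sub_eq_zero] at h
      exact h.symm
    have hWid' : ∀ {k : ℕ} (A : Matrix (Fin r) (Fin k) ℝ), W * (W * A) = W * A := by
      intro k A; rw [← Matrix.mul_assoc, hWW]
    have h1Wid : (1 - W) * (1 - W) = (1 - W) := by
      rw [Matrix.sub_mul, Matrix.one_mul, hW0, sub_zero]
    have h1Wid' : ∀ {k : ℕ} (A : Matrix (Fin r) (Fin k) ℝ),
        (1 - W) * ((1 - W) * A) = (1 - W) * A := by
      intro k A; rw [← Matrix.mul_assoc, h1Wid]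
    -- construct S₁
    have htZV : Zᵀ * VX = VX * Wᵀ := by
      have h := congrArg Matrix.transpose hVZ
      simpa only [Matrix.transpose_mul, Matrix.transpose_transpose] using h
    have hrZV : (Zᵀ * VX).rank = Zᵀ.rank := by
      apply le_antisymm (Matrix.rank_mul_le_left _ _)
      calc Zᵀ.rank = Z.rank := Matrix.rank_transpose Z
        _ = W.rank := eZ.symm
        _ = Wᵀ.rank := (Matrix.rank_transpose W).symm
        _ ≤ (VX * Wᵀ).rank := by
            conv_lhs => rw [← hVV Wᵀ]
            exact Matrix.rank_mul_le_right _ _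
        _ = (Zᵀ * VX).rank := by rw [htZV]
    have hrangeZ : LinearMap.range (Zᵀ * VX).mulVecLin = LinearMap.range Zᵀ.mulVecLin := by
      apply Submodule.eq_of_le_of_finrank_le (myRangeMulLe _ _)
      exact le_of_eq hrZV.symm
    have hCZ : Z - VX * W * VXᵀ = (1 - VX * VXᵀ) * Z := by
      have h : VX * VXᵀ * Z = VX * W * VXᵀ := by
        rw [Matrix.mul_assoc VX VXᵀ Z, hVZ, ← Matrix.mul_assoc]
      rw [Matrix.sub_mul, Matrix.one_mul, h]
    have hCtr : LinearMap.range (Z - VX * W * VXᵀ)ᵀ.mulVecLin ≤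
        LinearMap.range (Zᵀ * VX).mulVecLin := by
      rw [hrangeZ]
      have h : (Z - VX * W * VXᵀ)ᵀ = Zᵀ * (1 - VX * VXᵀ)ᵀ := by
        rw [hCZ, Matrix.transpose_mul]
      rw [h]; exact myRangeMulLe _ _
    obtain ⟨T, hT⟩ := myFactor _ _ hCtr
    have hCfac : Z - VX * W * VXᵀ = Tᵀ * (W * VXᵀ) := by
      have h := congrArg Matrix.transpose hT
      simp only [Matrix.transpose_transpose, Matrix.transpose_mul] at h
      rw [hVZ] at h
      exact h
    -- construct S₂
    have hrLU : (L * UX).rank = L.rank := by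
      apply le_antisymm (Matrix.rank_mul_le_left _ _)
      calc L.rank = (1 - W).rank := eL.symm
        _ ≤ (L * UX).rank := by
            rw [h1Wfac]
            exact myRank3 _ _ _
    have hrangeL : LinearMap.range (L * UX).mulVecLin = LinearMap.range L.mulVecLin := by
      apply Submodule.eq_of_le_of_finrank_le (myRangeMulLe _ _)
      exact le_of_eq hrLU.symm
    have hDfac0 : L - L * UX * UXᵀ = L * (1 - UX * UXᵀ) := by
      rw [Matrix.mul_sub, Matrix.mul_one, ← Matrix.mul_assoc]
    have hDtr : LinearMap.range (L - L * UX * UXᵀ).mulVecLin ≤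
        LinearMap.range (L * UX).mulVecLin := by
      rw [hrangeL, hDfac0]; exact myRangeMulLe _ _
    obtain ⟨T₂, hT₂⟩ := myFactor _ _ hDtr
    have hDU : (L - L * UX * UXᵀ) * UX = 0 := by
      rw [Matrix.sub_mul, Matrix.mul_assoc (L * UX), hU, Matrix.mul_one, sub_self]
    -- the required identities
    have hVS1 : VXᵀ * ((1 - VX * VXᵀ) * Tᵀ * W) = 0 := by
      have hV1 : VXᵀ * (1 - VX * VXᵀ) = 0 := by
        rw [Matrix.mul_sub, Matrix.mul_one, ← Matrix.mul_assoc, hV, Matrix.one_mul, sub_self]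
      rw [← Matrix.mul_assoc, ← Matrix.mul_assoc, hV1, Matrix.zero_mul, Matrix.zero_mul]
    have hS2U : (1 - W) * Sg⁻¹ * T₂ * (1 - UX * UXᵀ) * UX = 0 := by
      have hU1 : (1 - UX * UXᵀ) * UX = 0 := by
        rw [Matrix.sub_mul, Matrix.one_mul, Matrix.mul_assoc, hU, Matrix.mul_one, sub_self]
      rw [Matrix.mul_assoc, hU1, Matrix.mul_zero]
    have hZfin : Z = VX * W * VXᵀ + (1 - VX * VXᵀ) * Tᵀ * W * W * VXᵀ := by
      have hVC : VXᵀ * (Z - VX * W * VXᵀ) = 0 := by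
        rw [Matrix.mul_sub, hVZ, ← Matrix.mul_assoc, ← Matrix.mul_assoc, hV,
          Matrix.one_mul, sub_self]
      have h1VC : (1 - VX * VXᵀ) * (Z - VX * W * VXᵀ) = Z - VX * W * VXᵀ := by
        rw [Matrix.sub_mul, Matrix.one_mul, Matrix.mul_assoc VX VXᵀ (Z - VX * W * VXᵀ), hVC,
          Matrix.mul_zero, sub_zero]
      have hS1C : (1 - VX * VXᵀ) * Tᵀ * W * W * VXᵀ = Z - VX * W * VXᵀ := by
        calc (1 - VX * VXᵀ) * Tᵀ * W * W * VXᵀ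
            = (1 - VX * VXᵀ) * (Tᵀ * (W * VXᵀ)) := by
              simp only [Matrix.mul_assoc, hWid']
          _ = (1 - VX * VXᵀ) * (Z - VX * W * VXᵀ) := by rw [← hCfac]
          _ = Z - VX * W * VXᵀ := h1VC
      rw [hS1C]; abel
    have hLfin : L = UX * Sg * (1 - W) * Sg⁻¹ * UXᵀ +
        UX * Sg * (1 - W) * ((1 - W) * Sg⁻¹ * T₂ * (1 - UX * UXᵀ)) := by
      have hDfac : L - L * UX * UXᵀ = UX * Sg * (1 - W) * Sg⁻¹ * T₂ := by
        rw [hT₂, hLU]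
      have hD1U : (L - L * UX * UXᵀ) * (1 - UX * UXᵀ) = L - L * UX * UXᵀ := by
        rw [Matrix.mul_sub, Matrix.mul_one, ← Matrix.mul_assoc, hDU, Matrix.zero_mul, sub_zero]
      have h2 : UX * Sg * (1 - W) * ((1 - W) * Sg⁻¹ * T₂ * (1 - UX * UXᵀ)) =
          L - L * UX * UXᵀ := by
        calc UX * Sg * (1 - W) * ((1 - W) * Sg⁻¹ * T₂ * (1 - UX * UXᵀ))
            = UX * Sg * (1 - W) * Sg⁻¹ * T₂ * (1 - UX * UXᵀ) := by
              simp only [Matrix.mul_assoc, h1Wid']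
          _ = (L - L * UX * UXᵀ) * (1 - UX * UXᵀ) := by rw [← hDfac]
          _ = L - L * UX * UXᵀ := hD1U
      rw [h2, ← hLU]
      abel
    exact ⟨W, (1 - VX * VXᵀ) * Tᵀ * W, (1 - W) * Sg⁻¹ * T₂ * (1 - UX * UXᵀ),
      hWW, hVS1, hS2U, Matrix.rank_mul_le_right _ _,
      le_trans (Matrix.rank_mul_le_left _ _)
        (le_trans (Matrix.rank_mul_le_left _ _) (Matrix.rank_mul_le_left _ _)),
      hZfin, hLfin⟩
  · rintro ⟨W, S₁, S₂, hW, hS₁, hS₂, _, _, hZe, hLe⟩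
    have hS₁' : ∀ {k : ℕ} (A : Matrix (Fin r) (Fin k) ℝ), VXᵀ * (S₁ * A) = 0 := by
      intro k A; rw [← Matrix.mul_assoc, hS₁, Matrix.zero_mul]
    have hS₂' : ∀ {k : ℕ} (A : Matrix (Fin r) (Fin k) ℝ), S₂ * (UX * A) = 0 := by
      intro k A; rw [← Matrix.mul_assoc, hS₂, Matrix.zero_mul]
    have hXZ : X * Z = UX * (Sg * (W * VXᵀ)) := by
      rw [hZe]
      nth_rewrite 1 [hXe]
      simp only [Matrix.mul_add, Matrix.mul_assoc, hVV, hS₁', Matrix.mul_zero, add_zero]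
    have hLX : L * X = UX * (Sg * ((1 - W) * VXᵀ)) := by
      rw [hLe]
      nth_rewrite 1 [hXe]
      simp only [Matrix.add_mul, Matrix.mul_assoc, hUU, hSS, hS₂', Matrix.mul_zero, add_zero]
    have hfeas : X = X * Z + L * X := by
      rw [hXZ, hLX, hXe]
      rw [← Matrix.mul_add, ← Matrix.mul_add, ← Matrix.add_mul]
      have : W + (1 - W) = (1 : Matrix (Fin r) (Fin r) ℝ) := by abel
      rw [this, Matrix.one_mul, Matrix.mul_assoc]
    refine ⟨hfeas, fun Z' L' hfe => ?_⟩
    have hZr : Z.rank ≤ W.rank := by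
      have : Z = (VX + S₁) * W * VXᵀ := by rw [Matrix.add_mul, Matrix.add_mul, hZe]
      rw [this]; exact myRank3 _ _ _
    have hLr : L.rank ≤ (1 - W).rank := by
      have : L = UX * Sg * (1 - W) * (Sg⁻¹ * UXᵀ + S₂) := by
        rw [Matrix.mul_add, hLe, Matrix.mul_assoc (UX * Sg * (1 - W)) Sg⁻¹ UXᵀ]
      rw [this]
      exact le_trans (Matrix.rank_mul_le_left _ _) (Matrix.rank_mul_le_right _ _)
    have hsum : W.rank + (1 - W).rank ≤ r := by
      have h0 : W * (1 - W) = 0 := by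
        rw [Matrix.mul_sub, Matrix.mul_one, hW, sub_self]
      have := Matrix.rank_add_rank_le_card_of_mul_eq_zero h0
      simpa using this
    have := hlow Z' L' hfe
    omega
end

section
/- The unconstrained optimization problem of minimizing f(Z) = ‖Z‖_* + ‖X (I − Z) X†‖_* over all n×n matrices Z has minimum objective function value equal to rank(X). -/
open Matrix

variable {k : Type*} [Fintype k] [DecidableEq k]

lemma eig_congr {A B : Matrix k k ℝ} (h : A = B) (hA : A.IsHermitian) (hB : B.IsHermitian) :
    hA.eigenvalues = hB.eigenvalues := by subst h; rfl

lemma dot_self_nonneg (v : k → ℝ) : 0 ≤ v ⬝ᵥ v :=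
  Finset.sum_nonneg fun i _ => mul_self_nonneg _

lemma trace_eq_sum_eig {A : Matrix k k ℝ} (hA : A.IsHermitian) :
    A.trace = ∑ i, hA.eigenvalues i := by
  conv_lhs => rw [hA.spectral_theorem, Unitary.conjStarAlgAut_apply]
  rw [Matrix.trace_mul_cycle]
  rw [show (star (hA.eigenvectorUnitary : Matrix k k ℝ)) * (hA.eigenvectorUnitary : Matrix k k ℝ)
    = 1 from Unitary.coe_star_mul_self _, one_mul, Matrix.trace_diagonal]
  simp [RCLike.ofReal_real_eq_id]

-- trace via orthonormal eigenbasis of some hermitian S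
lemma trace_eq_sum_dot {S : Matrix k k ℝ} (hS : S.IsHermitian) (B : Matrix k k ℝ) :
    B.trace = ∑ i, (hS.eigenvectorBasis i : EuclideanSpace ℝ k) ⬝ᵥ
      (B *ᵥ (hS.eigenvectorBasis i : EuclideanSpace ℝ k)) := by
  set U := (hS.eigenvectorUnitary : Matrix k k ℝ) with hU
  have hUU : U * star U = 1 := Unitary.coe_mul_star_self _
  have hcol : ∀ i j, (hS.eigenvectorBasis i : EuclideanSpace ℝ k) j = U j i := fun i j => rfl
  have : ∀ i, (hS.eigenvectorBasis i : EuclideanSpace ℝ k) ⬝ᵥ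
      (B *ᵥ (hS.eigenvectorBasis i : EuclideanSpace ℝ k))
      = ∑ j, ∑ l, U j i * (B j l * U l i) := by
    intro i
    simp [dotProduct, mulVec, hcol, Finset.mul_sum]
  rw [Finset.sum_congr rfl fun i _ => this i]
  rw [Finset.sum_comm]
  have : ∀ j, ∑ i, ∑ l, U j i * (B j l * U l i) = ∑ l, B j l * (U * Uᵀ) l j := by
    intro j
    rw [Finset.sum_comm]
    refine Finset.sum_congr rfl fun l _ => ?_
    simp [Matrix.mul_apply, Finset.mul_sum]
    ring_nf
    exact Finset.sum_congr rfl fun i _ => by ring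
  rw [Finset.sum_congr rfl fun j _ => this j]
  have hUUT : U * Uᵀ = 1 := by
    have := hUU
    rwa [Matrix.star_eq_conjTranspose, Matrix.conjTranspose_eq_transpose_of_trivial] at this
  rw [hUUT]
  simp [Matrix.trace, Matrix.one_apply]

lemma orthonormal_dot {S : Matrix k k ℝ} (hS : S.IsHermitian) (i : k) :
    (hS.eigenvectorBasis i : EuclideanSpace ℝ k) ⬝ᵥ (hS.eigenvectorBasis i : EuclideanSpace ℝ k)
      = 1 := by
  have h := orthonormal_iff_ite.mp hS.eigenvectorBasis.orthonormal i i
  simp only [if_pos rfl] at h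
  rw [EuclideanSpace.inner_eq_star_dotProduct] at h
  simpa using h

lemma trace_mul_le_nuclearNorm (M A : Matrix k k ℝ)
    (hM : ∀ v : k → ℝ, (Mᵀ *ᵥ v) ⬝ᵥ (Mᵀ *ᵥ v) ≤ v ⬝ᵥ v) :
    (M * A).trace ≤ nuclearNorm A := by
  set hS := Matrix.isHermitian_conjTranspose_mul_self A with hhS
  rw [trace_eq_sum_dot hS (M * A), nuclearNorm]
  refine Finset.sum_le_sum fun i _ => ?_
  set u : k → ℝ := ⇑(hS.eigenvectorBasis i : EuclideanSpace ℝ k) with hu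
  have hu1 : u ⬝ᵥ u = 1 := orthonormal_dot hS i
  have hAH : Aᴴ = Aᵀ := Matrix.conjTranspose_eq_transpose_of_trivial A
  have heig : (Aᵀ * A) *ᵥ u = hS.eigenvalues i • u := by
    rw [← hAH]; exact hS.mulVec_eigenvectorBasis i
  have hy : (A *ᵥ u) ⬝ᵥ (A *ᵥ u) = hS.eigenvalues i := by
    rw [dotProduct_mulVec, ← Matrix.mulVec_transpose, Matrix.mulVec_mulVec, heig]
    rw [smul_dotProduct, hu1, smul_eq_mul, mul_one]
  have hx : (Mᵀ *ᵥ u) ⬝ᵥ (Mᵀ *ᵥ u) ≤ 1 := by rw [← hu1]; exact hM u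
  have h1 : u ⬝ᵥ ((M * A) *ᵥ u) = (Mᵀ *ᵥ u) ⬝ᵥ (A *ᵥ u) := by
    rw [← Matrix.mulVec_mulVec, dotProduct_mulVec, ← Matrix.mulVec_transpose]
  rw [h1]
  calc (Mᵀ *ᵥ u) ⬝ᵥ (A *ᵥ u)
      ≤ Real.sqrt ((Mᵀ *ᵥ u) ⬝ᵥ (Mᵀ *ᵥ u)) * Real.sqrt ((A *ᵥ u) ⬝ᵥ (A *ᵥ u)) := by
        have := Real.sum_mul_le_sqrt_mul_sqrt Finset.univ (Mᵀ *ᵥ u) (A *ᵥ u)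
        simpa [dotProduct, sq] using this
    _ ≤ 1 * Real.sqrt (hS.eigenvalues i) := by
        rw [hy]
        gcongr
        calc Real.sqrt ((Mᵀ *ᵥ u) ⬝ᵥ (Mᵀ *ᵥ u)) ≤ Real.sqrt 1 := Real.sqrt_le_sqrt hx
          _ = 1 := Real.sqrt_one
    _ = Real.sqrt (hS.eigenvalues i) := one_mul _

lemma nuclearNorm_zero : nuclearNorm (0 : Matrix k k ℝ) = 0 := by
  rw [nuclearNorm]
  refine Finset.sum_eq_zero fun i _ => ?_
  have h := (Matrix.isHermitian_conjTranspose_mul_self (0 : Matrix k k ℝ)).eigenvalues_eq i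
  simp only [Matrix.mul_zero, Matrix.zero_mulVec, dotProduct_zero, map_zero] at h
  simp [h]

lemma idem_eig_zero_or_one {Q : Matrix k k ℝ} (hQ : Q.IsHermitian) (hidem : Q * Q = Q) (i : k) :
    hQ.eigenvalues i = 0 ∨ hQ.eigenvalues i = 1 := by
  set u : k → ℝ := ⇑(hQ.eigenvectorBasis i : EuclideanSpace ℝ k) with hu
  have hv : Q *ᵥ u = hQ.eigenvalues i • u := hQ.mulVec_eigenvectorBasis i
  have h2 : Q *ᵥ (Q *ᵥ u) = hQ.eigenvalues i • (hQ.eigenvalues i • u) := by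
    rw [hv, Matrix.mulVec_smul, hv]
  rw [Matrix.mulVec_mulVec, hidem, hv] at h2
  have hne : u ≠ 0 := by
    intro h
    exact hQ.eigenvectorBasis.orthonormal.ne_zero i (by ext j; exact congrFun h j)
  obtain ⟨j, hj⟩ := Function.ne_iff.mp hne
  have := congrFun h2 j
  simp only [Pi.smul_apply, smul_eq_mul] at this
  have hval : hQ.eigenvalues i = hQ.eigenvalues i * hQ.eigenvalues i :=
    mul_left_cancel₀ (by simpa using hj) (by
      have : hQ.eigenvalues i * u j = hQ.eigenvalues i * (hQ.eigenvalues i * u j) := this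
      calc u j * hQ.eigenvalues i = hQ.eigenvalues i * u j := mul_comm _ _
        _ = hQ.eigenvalues i * (hQ.eigenvalues i * u j) := this
        _ = u j * (hQ.eigenvalues i * hQ.eigenvalues i) := by ring)
  have h0 : hQ.eigenvalues i * (hQ.eigenvalues i - 1) = 0 := by nlinarith [hval]
  rcases mul_eq_zero.mp h0 with h | h
  · exact Or.inl h
  · exact Or.inr (by linarith)

lemma proj_facts {Q : Matrix k k ℝ} (hsym : Qᵀ = Q) (hidem : Q * Q = Q) :
    nuclearNorm Q = Q.trace ∧ Q.trace = (Q.rank : ℝ) := by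
  have hQH : Qᴴ = Q := by
    rw [Matrix.conjTranspose_eq_transpose_of_trivial, hsym]
  have h0 : Qᴴ * Q = Q := by rw [hQH, hidem]
  have hQ : Q.IsHermitian := hQH
  have heigc : (Matrix.isHermitian_conjTranspose_mul_self Q).eigenvalues = hQ.eigenvalues :=
    eig_congr h0 _ _
  have h01 := idem_eig_zero_or_one hQ hidem
  have h1 : nuclearNorm Q = ∑ i, hQ.eigenvalues i := by
    rw [nuclearNorm, heigc]
    refine Finset.sum_congr rfl fun i _ => ?_
    rcases h01 i with h | h <;> simp [h]
  have h2 : Q.trace = ∑ i, hQ.eigenvalues i := trace_eq_sum_eig hQ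
  refine ⟨h1.trans h2.symm, ?_⟩
  rw [h2, hQ.rank_eq_card_non_zero_eigs]
  rw [Fintype.card_subtype]
  rw [← Finset.sum_boole]
  push_cast
  refine Finset.sum_congr rfl fun i _ => ?_
  rcases h01 i with h | h <;> simp [h]


/-- The unconstrained problem `min_Z ‖Z‖_* + ‖X (I − Z) X†‖_*` has minimum value
`rank X`. -/
theorem stmt10 {m n : ℕ} (X : Matrix (Fin m) (Fin n) ℝ) (hX : X ≠ 0)
    (P : Matrix (Fin n) (Fin m) ℝ) (hP : IsMoorePenroseInv X P) :
    IsLeast {v : ℝ | ∃ Z : Matrix (Fin n) (Fin n) ℝ,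
      v = nuclearNorm Z + nuclearNorm (X * (1 - Z) * P)} (X.rank : ℝ) := by
  obtain ⟨h1, h2, h3, h4⟩ := hP
  set Q : Matrix (Fin n) (Fin n) ℝ := P * X with hQdef
  have hsym : Qᵀ = Q := h4
  have hidem : Q * Q = Q := by
    rw [hQdef]
    calc P * X * (P * X) = P * X * P * X := by rw [Matrix.mul_assoc (P * X) P X]
      _ = P * X := by rw [h2]
  obtain ⟨hnn, htr⟩ := proj_facts hsym hidem
  -- rank Q = rank X
  have hrk : Q.rank = X.rank := by
    refine le_antisymm (Matrix.rank_mul_le_right P X) ?_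
    have : X = X * Q := by rw [hQdef, ← Matrix.mul_assoc, h1]
    calc X.rank = (X * Q).rank := by rw [← this]
      _ ≤ Q.rank := Matrix.rank_mul_le_right X Q
  have hrtr : (X.rank : ℝ) = Q.trace := by rw [htr, hrk]
  -- X * (1 - Q) = 0
  have hX1Q : X * (1 - Q) = 0 := by
    rw [Matrix.mul_sub, Matrix.mul_one, hQdef, ← Matrix.mul_assoc, h1, sub_self]
  constructor
  · exact ⟨Q, by rw [hX1Q, Matrix.zero_mul, nuclearNorm_zero, add_zero, hnn, hrtr]⟩
  · rintro v ⟨Z, rfl⟩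
    -- first bound : trace (Q * Z) ≤ nuclearNorm Z
    have hMQ : ∀ v : Fin n → ℝ, (Qᵀ *ᵥ v) ⬝ᵥ (Qᵀ *ᵥ v) ≤ v ⬝ᵥ v := by
      intro v
      rw [hsym]
      have hq : (Q *ᵥ v) ⬝ᵥ (Q *ᵥ v) = v ⬝ᵥ (Q *ᵥ v) := by
        rw [dotProduct_mulVec, ← Matrix.mulVec_transpose, hsym, Matrix.mulVec_mulVec, hidem]
        exact dotProduct_comm _ _
      have hw : 0 ≤ (v - Q *ᵥ v) ⬝ᵥ (v - Q *ᵥ v) := dot_self_nonneg _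
      have hexp : (v - Q *ᵥ v) ⬝ᵥ (v - Q *ᵥ v) = v ⬝ᵥ v - v ⬝ᵥ (Q *ᵥ v) := by
        rw [sub_dotProduct, dotProduct_sub, dotProduct_sub, hq,
          dotProduct_comm (Q *ᵥ v) v]
        ring
      rw [hq]
      linarith [hexp ▸ hw]
    have ha : (Q * Z).trace ≤ nuclearNorm Z := trace_mul_le_nuclearNorm Q Z hMQ
    have hb : (X * (1 - Z) * P).trace ≤ nuclearNorm (X * (1 - Z) * P) := by
      have := trace_mul_le_nuclearNorm 1 (X * (1 - Z) * P)
        (fun v => by simp [Matrix.transpose_one])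
      simpa using this
    -- trace identity
    have hid : (Q * Z).trace + (X * (1 - Z) * P).trace = Q.trace := by
      have e1 : X * (1 - Z) * P = X * P - X * (Z * P) := by
        rw [Matrix.mul_sub, Matrix.mul_one, Matrix.sub_mul, Matrix.mul_assoc]
      rw [e1, Matrix.trace_sub]
      have e2 : (X * P).trace = Q.trace := Matrix.trace_mul_comm X P
      have e3 : (X * (Z * P)).trace = (Q * Z).trace := by
        rw [Matrix.trace_mul_comm X (Z * P), Matrix.mul_assoc Z P X, Matrix.trace_mul_comm Z (P * X)]
      rw [e2, e3]
      ring
    linarith [hrtr, hid, ha, hb]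
end

section
/- The matrix Z* = (1/2) X† X attains the minimum of f(Z) = ‖Z‖_* + ‖X (I − Z) X†‖_* over all n×n matrices Z, and f(Z*) = rank(X). -/
open Matrix

section Aux
variable {k : Type*} [Fintype k] [DecidableEq k]

lemma star_mat_eq (A : Matrix k k ℝ) : star A = Aᵀ := by
  ext i j; simp [conjTranspose_apply]

lemma trace_eq_sum_eigenvalues {S : Matrix k k ℝ} (hS : S.IsHermitian) :
    S.trace = ∑ i, hS.eigenvalues i := by
  conv_lhs => rw [hS.spectral_theorem, Unitary.conjStarAlgAut_apply]
  rw [trace_mul_cycle, Unitary.coe_star_mul_self, one_mul, trace_diagonal]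
  simp

lemma eigenvalues_sq {S : Matrix k k ℝ} (hS : S.IsHermitian) (c : ℝ)
    (h : S * S = c • S) (i : k) :
    hS.eigenvalues i * hS.eigenvalues i = c * hS.eigenvalues i := by
  have hv := hS.mulVec_eigenvectorBasis i
  have hne : (⇑(hS.eigenvectorBasis i) : k → ℝ) ≠ 0 := by
    have h0 := hS.eigenvectorBasis.orthonormal.ne_zero i
    intro hcon
    apply h0
    ext j
    exact congrFun hcon j
  obtain ⟨j, hj⟩ := Function.ne_iff.mp hne
  have h2 : (S * S) *ᵥ ⇑(hS.eigenvectorBasis i)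
      = (hS.eigenvalues i * hS.eigenvalues i) • ⇑(hS.eigenvectorBasis i) := by
    rw [← mulVec_mulVec, hv, mulVec_smul, hv, smul_smul]
  rw [h, smul_mulVec, hv, smul_smul] at h2
  have h3 := congrFun h2 j
  simp only [Pi.smul_apply, smul_eq_mul] at h3
  exact (mul_right_cancel₀ hj h3).symm

end Aux

section Aux2
variable {k : Type*} [Fintype k] [DecidableEq k]

lemma conjT_eq {a b : Type*} (A : Matrix a b ℝ) : Aᴴ = Aᵀ := by
  ext i j; simp [conjTranspose_apply]

lemma nuclearNorm_half_proj {Q : Matrix k k ℝ} (hQs : Qᵀ = Q) (hQi : Q * Q = Q) :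
    nuclearNorm (((1:ℝ)/2) • Q) = Q.trace / 2 := by
  set A := ((1:ℝ)/2) • Q with hA
  have hS := Matrix.isHermitian_conjTranspose_mul_self A
  have hAT : Aᴴ * A = (1/4 : ℝ) • Q := by
    rw [hA, conjT_eq, transpose_smul, hQs, smul_mul_assoc, mul_smul_comm, hQi, smul_smul]
    norm_num
  have hsq : (Aᴴ * A) * (Aᴴ * A) = (1/4 : ℝ) • (Aᴴ * A) := by
    rw [hAT, smul_mul_assoc, mul_smul_comm, hQi, smul_smul]
  have key : ∀ i, Real.sqrt (hS.eigenvalues i) = 2 * hS.eigenvalues i := by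
    intro i
    have h := eigenvalues_sq hS ((1:ℝ)/4) (by simpa using hsq) i
    have : hS.eigenvalues i = 0 ∨ hS.eigenvalues i = 1/4 := by
      rcases mul_eq_zero.mp (show (hS.eigenvalues i - 1/4) * hS.eigenvalues i = 0 by ring_nf; linarith [h]) with h' | h'
      · right; linarith
      · left; exact h'
    rcases this with h' | h'
    · rw [h']; simp
    · rw [h']
      rw [show (1/4 : ℝ) = (1/2)^2 by norm_num, Real.sqrt_sq (by norm_num)]
      norm_num
  have htr : (Aᴴ * A).trace = (1/4 : ℝ) * Q.trace := by rw [hAT, trace_smul]; simp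
  rw [nuclearNorm]
  calc ∑ i, Real.sqrt ((Matrix.isHermitian_conjTranspose_mul_self A).eigenvalues i)
      = ∑ i, 2 * hS.eigenvalues i := by exact Finset.sum_congr rfl fun i _ => key i
    _ = 2 * (Aᴴ * A).trace := by rw [← Finset.mul_sum, ← trace_eq_sum_eigenvalues hS]
    _ = Q.trace / 2 := by rw [htr]; ring

lemma trace_proj_eq_rank {Q : Matrix k k ℝ} (hQs : Qᵀ = Q) (hQi : Q * Q = Q) :
    Q.trace = (Q.rank : ℝ) := by
  have hS : Q.IsHermitian := by show Qᴴ = Q; rw [conjT_eq]; exact hQs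
  have key : ∀ i, hS.eigenvalues i = 0 ∨ hS.eigenvalues i = 1 := by
    intro i
    have h := eigenvalues_sq hS 1 (by simpa using hQi) i
    rcases mul_eq_zero.mp (show (hS.eigenvalues i - 1) * hS.eigenvalues i = 0 by ring_nf; linarith [h]) with h' | h'
    · right; linarith
    · left; exact h'
  rw [trace_eq_sum_eigenvalues hS, hS.rank_eq_card_non_zero_eigs, Fintype.card_subtype]
  rw [← Finset.sum_filter_ne_zero]
  rw [Finset.sum_congr rfl (fun i hi => show hS.eigenvalues i = 1 by
    rcases key i with h' | h'
    · exact absurd h' (Finset.mem_filter.mp hi).2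
    · exact h')]
  simp

end Aux2

section Aux3
variable {k : Type*} [Fintype k] [DecidableEq k]

lemma trace_mul_le_nuclearNorm_s11 {Q B : Matrix k k ℝ} (hQs : Qᵀ = Q) (hQi : Q * Q = Q) :
    (Q * B).trace ≤ nuclearNorm B := by
  have hS := Matrix.isHermitian_conjTranspose_mul_self B
  set V : Matrix k k ℝ := (hS.eigenvectorUnitary : Matrix k k ℝ) with hV
  have hstar : star V = Vᵀ := star_mat_eq V
  have hVV : Vᵀ * V = 1 := by
    rw [← hstar]; exact Unitary.coe_star_mul_self hS.eigenvectorUnitary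
  have hVVt : V * Vᵀ = 1 := by
    rw [← hstar]; exact Unitary.coe_mul_star_self hS.eigenvectorUnitary
  have hdiag : Vᵀ * (Bᴴ * B) * V = diagonal hS.eigenvalues := by
    have := hS.conjStarAlgAut_star_eigenvectorUnitary
    rw [Unitary.conjStarAlgAut_star_apply, hstar] at this
    exact this
  -- trace identity
  have htr : (Q * B).trace = ∑ i, ∑ j, (Q * V) j i * (B * V) j i := by
    have h1 : (Q * B).trace = (Vᵀ * (Q * B) * V).trace := by
      rw [trace_mul_cycle, ← mul_assoc, hVVt, one_mul]
    have h2 : Vᵀ * (Q * B) * V = (Q * V)ᵀ * (B * V) := by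
      rw [transpose_mul, hQs]
      noncomm_ring
    rw [h1, h2, Matrix.trace]
    simp [Matrix.mul_apply, Matrix.diag, mul_comm]
  -- column norms of B*V
  have hG : ∀ i, ∑ j, (B * V) j i ^ 2 = hS.eigenvalues i := by
    intro i
    have h2 : (B * V)ᵀ * (B * V) = diagonal hS.eigenvalues := by
      rw [← hdiag, transpose_mul, conjT_eq]
      noncomm_ring
    calc ∑ j, (B * V) j i ^ 2 = ((B * V)ᵀ * (B * V)) i i := by
          rw [Matrix.mul_apply]
          exact Finset.sum_congr rfl fun j _ => by rw [transpose_apply, sq]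
      _ = diagonal hS.eigenvalues i i := by rw [h2]
      _ = hS.eigenvalues i := diagonal_apply_eq _ i
  -- column norms of Q*V bounded by 1
  have hQ1s : (1 - Q)ᵀ = 1 - Q := by rw [transpose_sub, transpose_one, hQs]
  have hQ1i : (1 - Q) * (1 - Q) = 1 - Q := by noncomm_ring [hQi]
  have sqcol : ∀ (R : Matrix k k ℝ), Rᵀ = R → R * R = R →
      ∀ i, ∑ j, (R * V) j i ^ 2 = (Vᵀ * R * V) i i := by
    intro R hRs hRi i
    have h2 : (R * V)ᵀ * (R * V) = Vᵀ * R * V := by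
      rw [transpose_mul, hRs]
      calc Vᵀ * R * (R * V) = Vᵀ * (R * R) * V := by noncomm_ring
        _ = Vᵀ * R * V := by rw [hRi]
    calc ∑ j, (R * V) j i ^ 2 = ((R * V)ᵀ * (R * V)) i i := by
          rw [Matrix.mul_apply]
          exact Finset.sum_congr rfl fun j _ => by rw [transpose_apply, sq]
      _ = (Vᵀ * R * V) i i := by rw [h2]
  have hF : ∀ i, ∑ j, (Q * V) j i ^ 2 ≤ 1 := by
    intro i
    have e1 := sqcol Q hQs hQi i
    have e2 := sqcol (1 - Q) hQ1s hQ1i i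
    have e3 : (Vᵀ * Q * V) i i + (Vᵀ * (1 - Q) * V) i i = 1 := by
      have h4 : Vᵀ * Q * V + Vᵀ * (1 - Q) * V = 1 := by
        rw [mul_sub, sub_mul, mul_one, ← hVV]; abel
      have := congrFun (congrFun h4 i) i
      simpa using this
    have e4 : (0:ℝ) ≤ (Vᵀ * (1 - Q) * V) i i := by
      rw [← e2]; positivity
    rw [e1]; linarith
  -- per-column Cauchy-Schwarz
  have hcs : ∀ i, ∑ j, (Q * V) j i * (B * V) j i ≤ Real.sqrt (hS.eigenvalues i) := by
    intro i
    have cs := Finset.sum_mul_sq_le_sq_mul_sq Finset.univ (fun j => (Q * V) j i) (fun j => (B * V) j i)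
    have hμ0 : (0:ℝ) ≤ hS.eigenvalues i := by
      rw [← hG i]; positivity
    have h5 : (∑ j, (Q * V) j i * (B * V) j i) ^ 2 ≤ hS.eigenvalues i := by
      calc (∑ j, (Q * V) j i * (B * V) j i) ^ 2
          ≤ (∑ j, (Q * V) j i ^ 2) * ∑ j, (B * V) j i ^ 2 := cs
        _ ≤ 1 * hS.eigenvalues i := by
            rw [hG i]
            exact mul_le_mul_of_nonneg_right (hF i) hμ0
        _ = hS.eigenvalues i := one_mul _
    calc ∑ j, (Q * V) j i * (B * V) j i
        ≤ |∑ j, (Q * V) j i * (B * V) j i| := le_abs_self _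
      _ = Real.sqrt ((∑ j, (Q * V) j i * (B * V) j i) ^ 2) := (Real.sqrt_sq_eq_abs _).symm
      _ ≤ Real.sqrt (hS.eigenvalues i) := Real.sqrt_le_sqrt h5
  rw [htr, nuclearNorm]
  exact Finset.sum_le_sum fun i _ => hcs i

end Aux3

set_option maxHeartbeats 2000000

/-- `Z* = (1/2) X† X` attains the minimum of `f(Z) = ‖Z‖_* + ‖X (I − Z) X†‖_*`,
and `f(Z*) = rank X`. -/
theorem stmt11 {m n : ℕ} (X : Matrix (Fin m) (Fin n) ℝ) (hX : X ≠ 0)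
    (P : Matrix (Fin n) (Fin m) ℝ) (hP : IsMoorePenroseInv X P) :
    nuclearNorm (((1 : ℝ)/2) • (P * X)) +
        nuclearNorm (X * (1 - ((1 : ℝ)/2) • (P * X)) * P) = (X.rank : ℝ) ∧
    ∀ Z : Matrix (Fin n) (Fin n) ℝ,
      nuclearNorm (((1 : ℝ)/2) • (P * X)) +
          nuclearNorm (X * (1 - ((1 : ℝ)/2) • (P * X)) * P)
        ≤ nuclearNorm Z + nuclearNorm (X * (1 - Z) * P) := by
  obtain ⟨h1, h2, h3, h4⟩ := hP
  have hQs : (P * X)ᵀ = P * X := h4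
  have hQi : (P * X) * (P * X) = P * X := by rw [← Matrix.mul_assoc, h2]
  have hQ's : (X * P)ᵀ = X * P := h3
  have hQ'i : (X * P) * (X * P) = X * P := by rw [← Matrix.mul_assoc, h1]
  have hXQ : X * (P * X) = X := by rw [← Matrix.mul_assoc, h1]
  have hrank : (P * X).rank = X.rank := by
    refine le_antisymm (rank_mul_le_right P X) ?_
    have := rank_mul_le_right X (P * X)
    rwa [hXQ] at this
  have hsecond : X * (1 - ((1 : ℝ)/2) • (P * X)) * P = ((1:ℝ)/2) • (X * P) := by
    rw [Matrix.mul_sub, Matrix.mul_one, Matrix.mul_smul, hXQ, Matrix.sub_mul, Matrix.smul_mul]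
    have h5 : X * P - ((1:ℝ)/2) • (X * P) = ((1:ℝ) - 1/2) • (X * P) := by
      rw [sub_smul, one_smul]
    rw [h5]; norm_num
  have hEq : nuclearNorm (((1:ℝ)/2) • (P * X))
      + nuclearNorm (X * (1 - ((1:ℝ)/2) • (P * X)) * P) = (X.rank : ℝ) := by
    rw [hsecond, nuclearNorm_half_proj hQs hQi, nuclearNorm_half_proj hQ's hQ'i]
    rw [show (X * P).trace = (P * X).trace from trace_mul_comm X P]
    rw [trace_proj_eq_rank hQs hQi, hrank]
    ring
  refine ⟨hEq, fun Z => ?_⟩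
  rw [hEq]
  have hQ'B : (X * P) * (X * (1 - Z) * P) = X * (1 - Z) * P := by
    rw [← Matrix.mul_assoc, ← Matrix.mul_assoc, h1]
  have htr1 : ((P * X) * Z).trace ≤ nuclearNorm Z := trace_mul_le_nuclearNorm_s11 hQs hQi
  have htr2 : (X * (1 - Z) * P).trace ≤ nuclearNorm (X * (1 - Z) * P) := by
    have h6 := trace_mul_le_nuclearNorm_s11 (B := X * (1 - Z) * P) hQ's hQ'i
    rwa [hQ'B] at h6
  have hBtr : (X * (1 - Z) * P).trace = ((P * X) * (1 - Z)).trace := by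
    rw [trace_mul_cycle]
  have hsum : (P * X) * Z + (P * X) * (1 - Z) = P * X := by rw [Matrix.mul_sub, Matrix.mul_one]; abel
  have hsplit : (X.rank : ℝ) = ((P * X) * Z).trace + (X * (1 - Z) * P).trace := by
    rw [hBtr, ← trace_add, hsum, trace_proj_eq_rank hQs hQi, hrank]
  rw [hsplit]
  exact add_le_add htr1 htr2
end

section
/- The set of optimal solutions to the unconstrained problem of minimizing f(Z) = ‖Z‖_* + ‖X (I − Z) X†‖_* is exactly { Z* = V_X Ŵ V_Xᵀ }, where Ŵ ranges over all matrices of size rank(X) satisfying: (1) Ŵ is block diagonal compatibly with Σ_X, i.e., [Ŵ]_{ij} = 0 whenever [Σ_X]_{ii} ≠ [Σ_X]_{jj}; and (2) both Ŵ and I − Ŵ are symmetric positive semi-definite. -/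
open Matrix

section Aux

set_option linter.unusedSectionVars false
set_option linter.unusedVariables false

variable {m n : Type*} [Fintype m] [Fintype n] [DecidableEq n]

private lemma col_dot {p : Type*} [Fintype p] (C D : Matrix p n ℝ) (i : n) :
    (Cᴴ * D) i i = (fun k => C k i) ⬝ᵥ (fun k => D k i) := by
  simp [mul_apply, dotProduct, conjTranspose_apply]

private lemma psd_diag_nonneg {M : Matrix n n ℝ} (h : M.PosSemidef) (i : n) : 0 ≤ M.diag i := by
  rw [Matrix.diag_apply]
  have := h.diag_nonneg (i := i)
  simpa [dotProduct, mulVec, Pi.single_apply] using this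

private lemma dot_self_nonneg_s13 (d : m → ℝ) : 0 ≤ d ⬝ᵥ d :=
  Finset.sum_nonneg fun i _ => mul_self_nonneg _

private lemma dot_ineq (a b : m → ℝ) (l : ℝ) (hl : 0 ≤ l) (ha : a ⬝ᵥ a = l)
    (hb : b ⬝ᵥ b ≤ 1) :
    b ⬝ᵥ a ≤ Real.sqrt l ∧ (b ⬝ᵥ a = Real.sqrt l → a = Real.sqrt l • b) := by
  set s := Real.sqrt l with hsdef
  have hs : s * s = l := Real.mul_self_sqrt hl
  have hs0 : 0 ≤ s := Real.sqrt_nonneg l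
  set d := a - s • b with hddef
  have hdd : d ⬝ᵥ d = l - 2 * s * (b ⬝ᵥ a) + s * s * (b ⬝ᵥ b) := by
    simp [hddef, dotProduct_sub, sub_dotProduct, dotProduct_smul, smul_dotProduct,
      dotProduct_comm b a, ha]
    ring
  have hdd0 : 0 ≤ d ⬝ᵥ d := dot_self_nonneg_s13 d
  constructor
  · rcases eq_or_lt_of_le hl with h0 | hpos
    · have ha0 : a = 0 := dotProduct_self_eq_zero.mp (by rw [ha, ← h0])
      simp [ha0, hs0]
    · have hspos : 0 < s := Real.sqrt_pos.mpr hpos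
      nlinarith [hdd0, hdd, hs, hb, hspos]
  · intro heq
    have hle : d ⬝ᵥ d ≤ 0 := by nlinarith [hdd, hs, hb, hs0, heq]
    have : d = 0 := dotProduct_self_eq_zero.mp (le_antisymm hle hdd0)
    have := sub_eq_zero.mp this
    rw [this]

/-- Key duality lemma: `tr(Bᴴ A) ≤ ‖A‖₊` whenever `BᴴB ≼ 1`, with the equality case. -/
private theorem key (A B : Matrix m n ℝ) (hB : (1 - Bᴴ * B).PosSemidef) :
    trace (Bᴴ * A) ≤ nuclearNorm A ∧
    (trace (Bᴴ * A) = nuclearNorm A →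
      ∃ S : Matrix n n ℝ, S.PosSemidef ∧ S * S = Aᴴ * A ∧ A = B * S) := by
  classical
  have hH := Matrix.isHermitian_conjTranspose_mul_self A
  set lam : n → ℝ := hH.eigenvalues with hlamdef
  set Q : Matrix n n ℝ := (hH.eigenvectorUnitary : Matrix n n ℝ) with hQdef
  have hQmem := hH.eigenvectorUnitary.2
  have hQ1 : Qᴴ * Q = 1 := by
    have := Matrix.mem_unitaryGroup_iff'.mp hQmem
    rwa [star_eq_conjTranspose] at this
  have hQ2 : Q * Qᴴ = 1 := by
    have := Matrix.mem_unitaryGroup_iff.mp hQmem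
    rwa [star_eq_conjTranspose] at this
  have hspec : Aᴴ * A = Q * diagonal lam * Qᴴ := by
    have := hH.spectral_theorem
    rwa [Unitary.conjStarAlgAut_apply, star_eq_conjTranspose, RCLike.ofReal_real_eq_id, Function.id_comp] at this
  have hlam0 : ∀ i, 0 ≤ lam i := fun i =>
    (Matrix.posSemidef_conjTranspose_mul_self A).eigenvalues_nonneg i
  have hnn : nuclearNorm A = ∑ i, Real.sqrt (lam i) := rfl
  set a : n → m → ℝ := fun i k => (A * Q) k i with hadef
  set b : n → m → ℝ := fun i k => (B * Q) k i with hbdef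
  have hAQ : (A * Q)ᴴ * (A * Q) = diagonal lam := by
    rw [conjTranspose_mul]
    calc Qᴴ * Aᴴ * (A * Q) = Qᴴ * (Aᴴ * A) * Q := by simp only [Matrix.mul_assoc]
      _ = (Qᴴ * Q) * diagonal lam * (Qᴴ * Q) := by rw [hspec]; simp only [Matrix.mul_assoc]
      _ = diagonal lam := by rw [hQ1]; simp
  have haa : ∀ i, a i ⬝ᵥ a i = lam i := by
    intro i
    have := col_dot (A * Q) (A * Q) i
    rw [hAQ] at this
    simpa [diagonal] using this.symm
  have hBQ : (B * Q)ᴴ * (B * Q) = Qᴴ * (Bᴴ * B) * Q := by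
    rw [conjTranspose_mul]; simp only [Matrix.mul_assoc]
  have hbb : ∀ i, b i ⬝ᵥ b i ≤ 1 := by
    intro i
    have hps : (1 - (B * Q)ᴴ * (B * Q)).PosSemidef := by
      have h := hB.mul_mul_conjTranspose_same Qᴴ
      have hexp : Qᴴ * (1 - Bᴴ * B) * Qᴴᴴ = 1 - (B * Q)ᴴ * (B * Q) := by
        rw [conjTranspose_conjTranspose, hBQ, mul_sub, mul_one, sub_mul, hQ1]
      rwa [hexp] at h
    have h0 := psd_diag_nonneg hps i
    rw [Matrix.diag_apply, Matrix.sub_apply, Matrix.one_apply_eq, col_dot] at h0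
    simp only [hbdef]
    linarith
  have htr : trace (Bᴴ * A) = ∑ i, b i ⬝ᵥ a i := by
    have h1 : Bᴴ * A = Q * ((B * Q)ᴴ * (A * Q)) * Qᴴ := by
      rw [conjTranspose_mul]
      calc Bᴴ * A = (Q * Qᴴ) * (Bᴴ * A) * (Q * Qᴴ) := by rw [hQ2]; simp
        _ = Q * (Qᴴ * Bᴴ * (A * Q)) * Qᴴ := by simp only [Matrix.mul_assoc]
    rw [h1, trace_mul_cycle, ← Matrix.mul_assoc, hQ1, Matrix.one_mul]
    rw [Matrix.trace]
    refine Finset.sum_congr rfl fun i _ => ?_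
    rw [Matrix.diag_apply, col_dot]
  constructor
  · rw [htr, hnn]
    exact Finset.sum_le_sum fun i _ =>
      (dot_ineq (a i) (b i) (lam i) (hlam0 i) (haa i) (hbb i)).1
  · intro heq
    rw [htr, hnn] at heq
    have hterm : ∀ i ∈ Finset.univ, b i ⬝ᵥ a i = Real.sqrt (lam i) :=
      (Finset.sum_eq_sum_iff_of_le fun i _ =>
        (dot_ineq (a i) (b i) (lam i) (hlam0 i) (haa i) (hbb i)).1).mp heq
    have hcols : ∀ i, a i = Real.sqrt (lam i) • b i := fun i =>
      (dot_ineq (a i) (b i) (lam i) (hlam0 i) (haa i) (hbb i)).2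
        (hterm i (Finset.mem_univ i))
    refine ⟨Q * diagonal (fun i => Real.sqrt (lam i)) * Qᴴ, ?_, ?_, ?_⟩
    · have : (diagonal (fun i => Real.sqrt (lam i))).PosSemidef :=
        Matrix.PosSemidef.diagonal fun i => Real.sqrt_nonneg _
      simpa using this.mul_mul_conjTranspose_same Q
    · calc Q * diagonal (fun i => Real.sqrt (lam i)) * Qᴴ *
          (Q * diagonal (fun i => Real.sqrt (lam i)) * Qᴴ)
          = Q * (diagonal (fun i => Real.sqrt (lam i)) * (Qᴴ * Q) *
              diagonal (fun i => Real.sqrt (lam i))) * Qᴴ := by simp only [Matrix.mul_assoc]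
        _ = Q * diagonal lam * Qᴴ := by
            rw [hQ1, mul_one, diagonal_mul_diagonal]
            have : (fun i => Real.sqrt (lam i) * Real.sqrt (lam i)) = lam :=
              funext fun i => Real.mul_self_sqrt (hlam0 i)
            rw [this]
        _ = Aᴴ * A := hspec.symm
    · have hAQBQ : A * Q = B * Q * diagonal (fun i => Real.sqrt (lam i)) := by
        ext k i
        have := congrFun (hcols i) k
        simpa [mul_diagonal, hadef, hbdef, mul_comm] using this
      calc A = A * Q * Qᴴ := by rw [Matrix.mul_assoc, hQ2, Matrix.mul_one]
        _ = B * (Q * diagonal (fun i => Real.sqrt (lam i)) * Qᴴ) := by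
            rw [hAQBQ]; simp only [Matrix.mul_assoc]

private theorem key' (A B : Matrix m n ℝ) (hB : (1 - Bᵀ * B).PosSemidef) :
    trace (Bᵀ * A) ≤ nuclearNorm A ∧
    (trace (Bᵀ * A) = nuclearNorm A →
      ∃ S : Matrix n n ℝ, S.PosSemidef ∧ S * S = Aᵀ * A ∧ A = B * S) := by
  have h := key A B (by rwa [conjTranspose_eq_transpose_of_trivial])
  rwa [conjTranspose_eq_transpose_of_trivial, conjTranspose_eq_transpose_of_trivial] at h

private theorem nuclearNorm_of_posSemidef {A : Matrix n n ℝ} (hA : A.PosSemidef) :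
    nuclearNorm A = trace A := by
  classical
  have hAH : Aᴴ = A := hA.1
  have hH := Matrix.isHermitian_conjTranspose_mul_self A
  set lam : n → ℝ := hH.eigenvalues with hlamdef
  set Q : Matrix n n ℝ := (hH.eigenvectorUnitary : Matrix n n ℝ) with hQdef
  have hQmem := hH.eigenvectorUnitary.2
  have hQ1 : Qᴴ * Q = 1 := by
    have := Matrix.mem_unitaryGroup_iff'.mp hQmem
    rwa [star_eq_conjTranspose] at this
  have hQ2 : Q * Qᴴ = 1 := by
    have := Matrix.mem_unitaryGroup_iff.mp hQmem
    rwa [star_eq_conjTranspose] at this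
  have hspec : Aᴴ * A = Q * diagonal lam * Qᴴ := by
    have := hH.spectral_theorem
    rwa [Unitary.conjStarAlgAut_apply, star_eq_conjTranspose, RCLike.ofReal_real_eq_id, Function.id_comp] at this
  have hlam0 : ∀ i, 0 ≤ lam i := fun i =>
    (Matrix.posSemidef_conjTranspose_mul_self A).eigenvalues_nonneg i
  have hnn : nuclearNorm A = ∑ i, Real.sqrt (lam i) := rfl
  set v : n → n → ℝ := fun i k => Q k i with hvdef
  have hMQ : (Aᴴ * A) * Q = Q * diagonal lam := by
    rw [hspec]
    simp only [Matrix.mul_assoc]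
    rw [hQ1, Matrix.mul_one]
  have hHv : ∀ i, (Aᴴ * A) *ᵥ v i = lam i • v i := by
    intro i
    funext k
    have := congrFun (congrFun hMQ k) i
    rw [show ((Aᴴ * A) * Q) k i = ((Aᴴ * A) *ᵥ fun l => Q l i) k from rfl] at this
    rw [show v i = fun l => Q l i from rfl]
    rw [this, mul_diagonal]
    simp [hvdef, mul_comm]
  have hMv : ∀ i, A *ᵥ (A *ᵥ v i) = lam i • v i := by
    intro i
    have hAA : A * A = Aᴴ * A := by rw [hAH]
    rw [mulVec_mulVec, hAA]
    exact hHv i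
  have hvv : ∀ i, v i ⬝ᵥ v i = 1 := by
    intro i
    have := col_dot Q Q i
    rw [hQ1] at this
    simpa using this.symm
  have hAvAv : ∀ i, (A *ᵥ v i) ⬝ᵥ (A *ᵥ v i) = lam i := by
    intro i
    have h2 : v i ⬝ᵥ ((Aᵀ * A) *ᵥ v i) = (A *ᵥ v i) ⬝ᵥ (A *ᵥ v i) := by
      rw [← mulVec_mulVec, dotProduct_mulVec, vecMul_transpose]
    have h3 : Aᵀ = Aᴴ := (conjTranspose_eq_transpose_of_trivial A).symm
    rw [h3, hHv i, dotProduct_smul, smul_eq_mul, hvv i, mul_one] at h2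
    exact h2.symm
  have hav : ∀ i, A *ᵥ v i = Real.sqrt (lam i) • v i := by
    intro i
    have hs : Real.sqrt (lam i) * Real.sqrt (lam i) = lam i := Real.mul_self_sqrt (hlam0 i)
    rcases eq_or_lt_of_le (hlam0 i) with h0 | hpos
    · have hAv : (A *ᵥ v i) ⬝ᵥ (A *ᵥ v i) = 0 := by rw [hAvAv i, ← h0]
      have hz : A *ᵥ v i = 0 := dotProduct_self_eq_zero.mp hAv
      rw [hz, ← h0, Real.sqrt_zero, zero_smul]
    · have hspos : 0 < Real.sqrt (lam i) := Real.sqrt_pos.mpr hpos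
      set s := Real.sqrt (lam i) with hsdef
      set w : n → ℝ := A *ᵥ v i - s • v i with hwdef
      have hw : A *ᵥ w + s • w = 0 := by
        rw [hwdef, mulVec_sub, mulVec_smul, hMv i, smul_sub, smul_smul, hs]
        abel
      have hps : 0 ≤ w ⬝ᵥ (A *ᵥ w) := by
        have := hA.dotProduct_mulVec_nonneg w
        rwa [star_trivial] at this
      have hzero : w ⬝ᵥ (A *ᵥ w) + s * (w ⬝ᵥ w) = 0 := by
        have := congrArg (fun u => w ⬝ᵥ u) hw
        simpa [dotProduct_add, dotProduct_smul, smul_eq_mul] using this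
      have hww : w ⬝ᵥ w = 0 := by
        have h4 : s * (w ⬝ᵥ w) ≤ 0 := by linarith
        have h5 : 0 ≤ w ⬝ᵥ w := dot_self_nonneg_s13 w
        nlinarith
      have hw0 : w = 0 := dotProduct_self_eq_zero.mp hww
      rw [hwdef] at hw0
      exact sub_eq_zero.mp hw0
  have htr : trace A = ∑ i, Real.sqrt (lam i) := by
    have h1 : A = Q * (Qᴴ * (A * Q)) * Qᴴ := by
      rw [← Matrix.mul_assoc, ← Matrix.mul_assoc, hQ2, Matrix.one_mul, Matrix.mul_assoc,
        hQ2, Matrix.mul_one]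
    rw [h1, trace_mul_cycle, ← Matrix.mul_assoc, hQ1, Matrix.one_mul, Matrix.trace]
    refine Finset.sum_congr rfl fun i _ => ?_
    rw [Matrix.diag_apply, col_dot Q (A * Q) i]
    have hcol : (fun k => (A * Q) k i) = A *ᵥ v i := rfl
    rw [hcol, hav i, dotProduct_smul, smul_eq_mul, hvv i, mul_one]
  rw [hnn, htr]

private lemma psd_tt (A : Matrix m n ℝ) : (Aᵀ * A).PosSemidef := by
  rw [← conjTranspose_eq_transpose_of_trivial]
  exact Matrix.posSemidef_conjTranspose_mul_self A

private lemma psd_conj {M : Matrix n n ℝ} (h : M.PosSemidef) {p : Type*} [Fintype p]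
    (B : Matrix p n ℝ) : (B * M * Bᵀ).PosSemidef := by
  rw [← conjTranspose_eq_transpose_of_trivial]
  exact h.mul_mul_conjTranspose_same B

private lemma mt_eq_zero {p : Type*} [Fintype p] {M : Matrix n p ℝ} (h : Mᵀ * M = 0) :
    M = 0 := by
  rw [← conjTranspose_eq_transpose_of_trivial] at h
  exact Matrix.conjTranspose_mul_self_eq_zero.mp h

/-- Projection facts for `V Vᵀ` when `Vᵀ V = 1`. -/
private lemma proj_facts_s13 {p : Type*} [Fintype p] [DecidableEq p]
    (V : Matrix n p ℝ) (hV : Vᵀ * V = 1) :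
    (V * Vᵀ)ᵀ = V * Vᵀ ∧ (V * Vᵀ) * (V * Vᵀ) = V * Vᵀ ∧
      (1 - (V * Vᵀ)ᵀ * (V * Vᵀ)).PosSemidef := by
  have ht : (V * Vᵀ)ᵀ = V * Vᵀ := by rw [transpose_mul, transpose_transpose]
  have hsq : (V * Vᵀ) * (V * Vᵀ) = V * Vᵀ := by
    calc (V * Vᵀ) * (V * Vᵀ) = V * ((Vᵀ * V) * Vᵀ) := by simp only [Matrix.mul_assoc]
      _ = V * Vᵀ := by rw [hV, Matrix.one_mul]
  refine ⟨ht, hsq, ?_⟩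
  rw [ht, hsq]
  have hexp : (1 - V * Vᵀ)ᵀ * (1 - V * Vᵀ) = 1 - V * Vᵀ := by
    rw [transpose_sub, transpose_one, ht, Matrix.sub_mul, Matrix.one_mul, Matrix.mul_sub,
      Matrix.mul_one, hsq]
    abel
  have := psd_tt (1 - V * Vᵀ)
  rwa [hexp] at this

private lemma mul_self_proj {B A S : Matrix n n ℝ} (hBt : Bᵀ = B) (hBsq : B * B = B)
    (hSpsd : S.PosSemidef) (hSsq : S * S = Aᵀ * A) (hAS : A = B * S) : A = S := by
  have hSt : Sᵀ = S := by
    rw [← conjTranspose_eq_transpose_of_trivial]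
    exact hSpsd.1
  have hAt : Aᵀ = S * B := by rw [hAS, transpose_mul, hSt, hBt]
  have hq : S * B * S = S * S := by
    rw [hSsq, hAt, hAS]
    simp only [Matrix.mul_assoc]
    rw [← Matrix.mul_assoc B B S, hBsq]
  have hp2 : (1 - B) * (1 - B) = 1 - B := by
    rw [Matrix.sub_mul, Matrix.one_mul, Matrix.mul_sub, Matrix.mul_one, hBsq]
    abel
  have hexp : ((1 - B) * S)ᵀ * ((1 - B) * S) = 0 := by
    rw [transpose_mul, transpose_sub, transpose_one, hBt, hSt]
    calc S * (1 - B) * ((1 - B) * S)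
        = S * ((1 - B) * (1 - B)) * S := by simp only [Matrix.mul_assoc]
      _ = S * (1 - B) * S := by rw [hp2]
      _ = 0 := by
          rw [Matrix.mul_sub, Matrix.mul_one, Matrix.sub_mul, hq]
          abel
  have hN0 : (1 - B) * S = 0 := mt_eq_zero hexp
  rw [Matrix.sub_mul, Matrix.one_mul, sub_eq_zero] at hN0
  rw [hAS, ← hN0]

end Aux

private lemma mp_unique {m n : Type*} [Fintype m] [Fintype n]
    (X : Matrix m n ℝ) (P₁ P₂ : Matrix n m ℝ)
    (h1 : IsMoorePenroseInv X P₁) (h2 : IsMoorePenroseInv X P₂) : P₁ = P₂ := by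
  obtain ⟨a1, b1, c1, d1⟩ := h1
  obtain ⟨a2, b2, c2, d2⟩ := h2
  have hXP : X * P₁ = X * P₂ := by
    calc X * P₁ = (X * P₁)ᵀ := c1.symm
      _ = ((X * P₂ * X) * P₁)ᵀ := by rw [a2]
      _ = ((X * P₂) * (X * P₁))ᵀ := by simp only [Matrix.mul_assoc]
      _ = (X * P₁)ᵀ * (X * P₂)ᵀ := by rw [transpose_mul]
      _ = (X * P₁) * (X * P₂) := by rw [c1, c2]
      _ = (X * P₁ * X) * P₂ := by simp only [Matrix.mul_assoc]
      _ = X * P₂ := by rw [a1]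
  have hPX : P₁ * X = P₂ * X := by
    calc P₁ * X = (P₁ * X)ᵀ := d1.symm
      _ = (P₁ * (X * P₂ * X))ᵀ := by rw [a2]
      _ = ((P₁ * X) * (P₂ * X))ᵀ := by simp only [Matrix.mul_assoc]
      _ = (P₂ * X)ᵀ * (P₁ * X)ᵀ := by rw [transpose_mul]
      _ = (P₂ * X) * (P₁ * X) := by rw [d1, d2]
      _ = P₂ * (X * P₁ * X) := by simp only [Matrix.mul_assoc]
      _ = P₂ * X := by rw [a1]
  calc P₁ = P₁ * X * P₁ := b1.symm
    _ = P₁ * (X * P₂) := by rw [← hXP]; simp only [Matrix.mul_assoc]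
    _ = (P₁ * X) * P₂ := by simp only [Matrix.mul_assoc]
    _ = (P₂ * X) * P₂ := by rw [hPX]
    _ = P₂ := b2

private lemma block_of_sym {r : ℕ} (σX : Fin r → ℝ) (hσ : ∀ i, 0 < σX i)
    (W : Matrix (Fin r) (Fin r) ℝ) (hWsym : Wᵀ = W)
    (hMsym : (diagonal σX * ((1 : Matrix (Fin r) (Fin r) ℝ) - W)
        * diagonal (fun i => (σX i)⁻¹))ᵀ
      = diagonal σX * ((1 : Matrix (Fin r) (Fin r) ℝ) - W)
        * diagonal (fun i => (σX i)⁻¹)) :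
    ∀ i j, σX i ≠ σX j → W i j = 0 := by
  intro i j hij
  have hne : i ≠ j := fun e => hij (by rw [e])
  have h := congrFun (congrFun hMsym i) j
  rw [transpose_apply, Matrix.mul_diagonal, Matrix.mul_diagonal,
    Matrix.diagonal_mul, Matrix.diagonal_mul, Matrix.sub_apply, Matrix.sub_apply,
    Matrix.one_apply_ne hne, Matrix.one_apply_ne hne.symm] at h
  have hji : W j i = W i j := by
    have := congrFun (congrFun hWsym i) j
    rw [transpose_apply] at this
    exact this
  rw [hji] at h
  by_contra h0
  have hσi := hσ i
  have hσj := hσ j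
  have h1 : σX j * (σX j * W i j) = σX i * (σX i * W i j) := by
    field_simp at h
    linear_combination (W i j) * h
  have h2 : (σX j - σX i) * (σX j + σX i) * W i j = 0 := by nlinarith [h1]
  rcases mul_eq_zero.mp h2 with h3 | h3
  · rcases mul_eq_zero.mp h3 with h4 | h4
    · exact hij (by linarith)
    · linarith
  · exact h0 h3

set_option maxHeartbeats 1000000 in
/-- Complete solutions to `min_Z ‖Z‖_* + ‖X (I − Z) X†‖_*`: `Z*` is optimal iff
`Z* = V_X Ŵ V_Xᵀ` where `Ŵ` is block diagonal compatibly with `Σ_X` and both `Ŵ`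
and `I − Ŵ` are symmetric positive semi-definite. -/
theorem stmt13 {m n r : ℕ} (X : Matrix (Fin m) (Fin n) ℝ) (hX : X ≠ 0)
    (P : Matrix (Fin n) (Fin m) ℝ) (hP : IsMoorePenroseInv X P)
    (UX : Matrix (Fin m) (Fin r) ℝ) (σX : Fin r → ℝ) (VX : Matrix (Fin n) (Fin r) ℝ)
    (hsvd : IsSkinnySVD X UX σX VX)
    (Zs : Matrix (Fin n) (Fin n) ℝ) :
    (∀ Z : Matrix (Fin n) (Fin n) ℝ,
      nuclearNorm Zs + nuclearNorm (X * (1 - Zs) * P)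
        ≤ nuclearNorm Z + nuclearNorm (X * (1 - Z) * P))
    ↔ ∃ W : Matrix (Fin r) (Fin r) ℝ,
        (∀ i j, σX i ≠ σX j → W i j = 0) ∧
        W.PosSemidef ∧ (1 - W).PosSemidef ∧
        Zs = VX * W * VXᵀ := by
  classical
  obtain ⟨hU, hV, hσ, hXd, hrank⟩ := hsvd
  have hσ0 : ∀ i, σX i ≠ 0 := fun i => ne_of_gt (hσ i)
  set D : Matrix (Fin r) (Fin r) ℝ := diagonal σX with hDdef
  set E : Matrix (Fin r) (Fin r) ℝ := diagonal (fun i => (σX i)⁻¹) with hEdef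
  have hDE : D * E = 1 := by
    rw [hDdef, hEdef, diagonal_mul_diagonal,
      show (fun i => σX i * (σX i)⁻¹) = fun _ => (1 : ℝ) from
        funext fun i => mul_inv_cancel₀ (hσ0 i), diagonal_one]
  have hED : E * D = 1 := by
    rw [hDdef, hEdef, diagonal_mul_diagonal,
      show (fun i => (σX i)⁻¹ * σX i) = fun _ => (1 : ℝ) from
        funext fun i => inv_mul_cancel₀ (hσ0 i), diagonal_one]
  -- identify the pseudo-inverse
  have hXP0 : X * (VX * E * UXᵀ) = UX * UXᵀ := by
    rw [hXd]
    simp only [Matrix.mul_assoc]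
    rw [← Matrix.mul_assoc VXᵀ VX, hV, Matrix.one_mul, ← Matrix.mul_assoc D E, hDE,
      Matrix.one_mul]
  have hPX0 : (VX * E * UXᵀ) * X = VX * VXᵀ := by
    rw [hXd]
    simp only [Matrix.mul_assoc]
    rw [← Matrix.mul_assoc UXᵀ UX, hU, Matrix.one_mul, ← Matrix.mul_assoc E D, hED,
      Matrix.one_mul]
  have hPval : P = VX * E * UXᵀ := by
    refine mp_unique X P (VX * E * UXᵀ) hP ⟨?_, ?_, ?_, ?_⟩
    · rw [hXP0, hXd]
      simp only [Matrix.mul_assoc]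
      rw [← Matrix.mul_assoc UXᵀ UX, hU, Matrix.one_mul]
    · rw [hPX0]
      simp only [Matrix.mul_assoc]
      rw [← Matrix.mul_assoc VXᵀ VX, hV, Matrix.one_mul]
    · rw [hXP0, transpose_mul, transpose_transpose]
    · rw [hPX0, transpose_mul, transpose_transpose]
  -- the sandwich identity
  have sandwich : ∀ M : Matrix (Fin n) (Fin n) ℝ,
      (UX * D * VXᵀ) * M * (VX * E * UXᵀ) = UX * (D * (VXᵀ * M * VX) * E) * UXᵀ := by
    intro M
    simp only [Matrix.mul_assoc]
  -- block-diagonal collapse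
  have dwe : ∀ W : Matrix (Fin r) (Fin r) ℝ, (∀ i j, σX i ≠ σX j → W i j = 0) →
      D * ((1 : Matrix (Fin r) (Fin r) ℝ) - W) * E = 1 - W := by
    intro W hblk
    ext i j
    rw [Matrix.mul_diagonal, Matrix.diagonal_mul]
    by_cases hij : σX i = σX j
    · rw [hij, mul_comm (σX j), mul_assoc, mul_inv_cancel₀ (hσ0 j), mul_one]
    · have hij' : i ≠ j := fun h => hij (by rw [h])
      rw [Matrix.sub_apply, Matrix.one_apply_ne hij', hblk i j hij]
      ring
  -- value of the candidate solutions
  obtain ⟨hB1t, hB1sq, hB1psd⟩ := proj_facts_s13 VX hV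
  obtain ⟨hB2t, hB2sq, hB2psd⟩ := proj_facts_s13 UX hU
  have valW : ∀ W : Matrix (Fin r) (Fin r) ℝ, (∀ i j, σX i ≠ σX j → W i j = 0) →
      W.PosSemidef → (1 - W).PosSemidef →
      nuclearNorm (VX * W * VXᵀ) + nuclearNorm (X * (1 - VX * W * VXᵀ) * P)
        = trace (1 : Matrix (Fin r) (Fin r) ℝ) := by
    intro W hblk hW h1W
    have hmid : VXᵀ * (1 - VX * W * VXᵀ) * VX = 1 - W := by
      rw [Matrix.mul_sub, Matrix.mul_one, Matrix.sub_mul, hV]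
      congr 1
      calc VXᵀ * (VX * W * VXᵀ) * VX = VXᵀ * VX * (W * (VXᵀ * VX)) := by
            simp only [Matrix.mul_assoc]
        _ = W := by rw [hV, Matrix.one_mul, Matrix.mul_one]
    have hG : X * (1 - VX * W * VXᵀ) * P = UX * (1 - W) * UXᵀ := by
      rw [hPval, hXd, sandwich, hmid, dwe W hblk]
    have hZpsd : (VX * W * VXᵀ).PosSemidef := psd_conj hW VX
    have hGpsd : (UX * (1 - W) * UXᵀ).PosSemidef := psd_conj h1W UX
    rw [hG, nuclearNorm_of_posSemidef hZpsd, nuclearNorm_of_posSemidef hGpsd]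
    have t1 : trace (VX * W * VXᵀ) = trace W := by
      rw [trace_mul_cycle, hV, Matrix.one_mul]
    have t2 : trace (UX * (1 - W) * UXᵀ) = trace (1 : Matrix (Fin r) (Fin r) ℝ) - trace W := by
      rw [trace_mul_cycle, hU, Matrix.one_mul, trace_sub]
    rw [t1, t2]; ring
  -- the lower bound via trace duality
  have hlow : ∀ Z : Matrix (Fin n) (Fin n) ℝ,
      trace ((VX * VXᵀ)ᵀ * Z) ≤ nuclearNorm Z ∧
      trace ((UX * UXᵀ)ᵀ * (X * (1 - Z) * P)) ≤ nuclearNorm (X * (1 - Z) * P) ∧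
      trace ((VX * VXᵀ)ᵀ * Z) + trace ((UX * UXᵀ)ᵀ * (X * (1 - Z) * P))
        = trace (1 : Matrix (Fin r) (Fin r) ℝ) := by
    intro Z
    refine ⟨(key' Z (VX * VXᵀ) hB1psd).1, (key' _ (UX * UXᵀ) hB2psd).1, ?_⟩
    have hGt : (UX * UXᵀ)ᵀ * (X * (1 - Z) * P)
        = UX * (D * (VXᵀ * (1 - Z) * VX) * E) * UXᵀ := by
      rw [hB2t, hPval, hXd]
      simp only [Matrix.mul_assoc]
      rw [← Matrix.mul_assoc UXᵀ UX, hU, Matrix.one_mul]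
    have htr2 : ∀ Y : Matrix (Fin r) (Fin r) ℝ,
        trace (UX * (D * Y * E) * UXᵀ) = trace Y := by
      intro Y
      rw [trace_mul_cycle, hU, Matrix.one_mul, trace_mul_cycle, hED, Matrix.one_mul]
    have hY : VXᵀ * (1 - Z) * VX = 1 - VXᵀ * Z * VX := by
      rw [Matrix.mul_sub, Matrix.mul_one, Matrix.sub_mul, hV]
    have t1 : trace ((VX * VXᵀ)ᵀ * Z) = trace (VXᵀ * Z * VX) := by
      have h : (VX * VXᵀ) * Z = VX * (VXᵀ * Z) := by simp only [Matrix.mul_assoc]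
      rw [hB1t, h, trace_mul_comm]
    rw [hGt, htr2, hY, trace_sub, t1]
    ring
  constructor
  · -- forward: optimality implies the structure
    intro hopt
    have hone_blk : ∀ i j, σX i ≠ σX j → (1 : Matrix (Fin r) (Fin r) ℝ) i j = 0 := by
      intro i j hij
      exact Matrix.one_apply_ne fun h => hij (by rw [h])
    have hone_psd : (1 : Matrix (Fin r) (Fin r) ℝ).PosSemidef := by
      rw [← Matrix.diagonal_one]
      exact Matrix.PosSemidef.diagonal fun i => zero_le_one
    have hzero_psd : ((1 : Matrix (Fin r) (Fin r) ℝ) - 1).PosSemidef := by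
      rw [sub_self]
      exact ⟨Matrix.isHermitian_zero, by simp⟩
    have hval1 := valW 1 hone_blk hone_psd hzero_psd
    have hle := hopt (VX * (1 : Matrix (Fin r) (Fin r) ℝ) * VXᵀ)
    rw [hval1] at hle
    obtain ⟨l1, l2, lsum⟩ := hlow Zs
    have e1 : trace ((VX * VXᵀ)ᵀ * Zs) = nuclearNorm Zs := by linarith
    have e2 : trace ((UX * UXᵀ)ᵀ * (X * (1 - Zs) * P))
        = nuclearNorm (X * (1 - Zs) * P) := by linarith
    obtain ⟨S₁, hS₁psd, hS₁sq, hZsS⟩ := (key' Zs (VX * VXᵀ) hB1psd).2 e1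
    have hZs_eq_S : Zs = S₁ := mul_self_proj hB1t hB1sq hS₁psd hS₁sq hZsS
    have hZs_psd : Zs.PosSemidef := by rw [hZs_eq_S]; exact hS₁psd
    have hZsB : Zs = (VX * VXᵀ) * Zs := by
      have h := hZsS
      rw [← hZs_eq_S] at h
      exact h
    have hZsym : Zsᵀ = Zs := by
      rw [← conjTranspose_eq_transpose_of_trivial]
      exact hZs_psd.1
    have hZsBr : Zs = Zs * (VX * VXᵀ) := by
      have h := congrArg Matrix.transpose hZsB
      rw [transpose_mul, hZsym, hB1t] at h
      exact h
    -- the witness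
    have hZsW : Zs = VX * (VXᵀ * Zs * VX) * VXᵀ := by
      have h5 : VX * (VXᵀ * Zs * VX) * VXᵀ = (VX * VXᵀ) * Zs * (VX * VXᵀ) := by
        simp only [Matrix.mul_assoc]
      rw [h5, ← hZsB, ← hZsBr]
    have hWpsd : (VXᵀ * Zs * VX).PosSemidef := by
      have := psd_conj hZs_psd VXᵀ
      rwa [transpose_transpose] at this
    have hWsym : (VXᵀ * Zs * VX)ᵀ = VXᵀ * Zs * VX := by
      rw [transpose_mul, transpose_mul, transpose_transpose, hZsym]
      simp only [Matrix.mul_assoc]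
    -- second equality case
    obtain ⟨S₂, hS₂psd, hS₂sq, hGS⟩ := (key' (X * (1 - Zs) * P) (UX * UXᵀ) hB2psd).2 e2
    have hG_eq_S : X * (1 - Zs) * P = S₂ := mul_self_proj hB2t hB2sq hS₂psd hS₂sq hGS
    have hG_psd : (X * (1 - Zs) * P).PosSemidef := by rw [hG_eq_S]; exact hS₂psd
    have hGsym : (X * (1 - Zs) * P)ᵀ = X * (1 - Zs) * P := by
      rw [← conjTranspose_eq_transpose_of_trivial]
      exact hG_psd.1
    have hmidZs : VXᵀ * (1 - Zs) * VX = 1 - VXᵀ * Zs * VX := by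
      rw [Matrix.mul_sub, Matrix.mul_one, Matrix.sub_mul, hV]
    have hGform : X * (1 - Zs) * P
        = UX * (D * (1 - VXᵀ * Zs * VX) * E) * UXᵀ := by
      rw [hPval, hXd, sandwich, hmidZs]
    have hmid2 : UXᵀ * (X * (1 - Zs) * P) * UX = D * (1 - VXᵀ * Zs * VX) * E := by
      rw [hGform]
      calc UXᵀ * (UX * (D * (1 - VXᵀ * Zs * VX) * E) * UXᵀ) * UX
          = UXᵀ * UX * (D * (1 - VXᵀ * Zs * VX) * E * (UXᵀ * UX)) := by
            simp only [Matrix.mul_assoc]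
        _ = D * (1 - VXᵀ * Zs * VX) * E := by
            rw [hU, Matrix.one_mul, Matrix.mul_one]
    have hMsym : (D * (1 - VXᵀ * Zs * VX) * E)ᵀ = D * (1 - VXᵀ * Zs * VX) * E := by
      rw [← hmid2, transpose_mul, transpose_mul, transpose_transpose, hGsym]
      simp only [Matrix.mul_assoc]
    have hblk : ∀ i j, σX i ≠ σX j → (VXᵀ * Zs * VX) i j = 0 := by
      refine block_of_sym σX hσ _ hWsym ?_
      rw [← hDdef, ← hEdef]
      exact hMsym
    have hGU : X * (1 - Zs) * P = UX * (1 - VXᵀ * Zs * VX) * UXᵀ := by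
      rw [hGform, dwe _ hblk]
    have h1Wpsd : ((1 : Matrix (Fin r) (Fin r) ℝ) - VXᵀ * Zs * VX).PosSemidef := by
      have hpsd := psd_conj hG_psd UXᵀ
      rw [transpose_transpose] at hpsd
      have hcoll : UXᵀ * (X * (1 - Zs) * P) * UX = 1 - VXᵀ * Zs * VX := by
        rw [hGU]
        calc UXᵀ * (UX * (1 - VXᵀ * Zs * VX) * UXᵀ) * UX
            = UXᵀ * UX * ((1 - VXᵀ * Zs * VX) * (UXᵀ * UX)) := by
              simp only [Matrix.mul_assoc]
          _ = 1 - VXᵀ * Zs * VX := by rw [hU, Matrix.one_mul, Matrix.mul_one]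
      rwa [hcoll] at hpsd
    exact ⟨VXᵀ * Zs * VX, hblk, hWpsd, h1Wpsd, hZsW⟩
  · -- backward: the structure implies optimality
    rintro ⟨W, hblk, hWpsd, h1Wpsd, hZsW⟩ Z
    have hval := valW W hblk hWpsd h1Wpsd
    rw [← hZsW] at hval
    obtain ⟨l1, l2, lsum⟩ := hlow Z
    linarith
end

section
/- If Ŵ is a square matrix of size rank(X) that is not idempotent (Ŵ² ≠ Ŵ), then Z* = V_X Ŵ V_Xᵀ cannot be written in the form Z* = V_X W̃ V_Xᵀ + S₁ W̃ V_Xᵀ with W̃ an idempotent matrix and S₁ a matrix satisfying V_Xᵀ S₁ = 0 and rank(S₁) ≤ rank(W̃). -/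
open Matrix

/-- If `Ŵ` is not idempotent, then `V_X Ŵ V_Xᵀ` cannot be written as
`V_X W̃ V_Xᵀ + S₁ W̃ V_Xᵀ` with `W̃` idempotent, `V_Xᵀ S₁ = 0` and
`rank S₁ ≤ rank W̃`. -/
theorem stmt15 {m n r : ℕ} (X : Matrix (Fin m) (Fin n) ℝ) (hX : X ≠ 0)
    (UX : Matrix (Fin m) (Fin r) ℝ) (σX : Fin r → ℝ) (VX : Matrix (Fin n) (Fin r) ℝ)
    (hsvd : IsSkinnySVD X UX σX VX)
    (W : Matrix (Fin r) (Fin r) ℝ) (hW : W * W ≠ W) :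
    ¬ ∃ (Wt : Matrix (Fin r) (Fin r) ℝ) (S₁ : Matrix (Fin n) (Fin r) ℝ),
        Wt * Wt = Wt ∧ VXᵀ * S₁ = 0 ∧ S₁.rank ≤ Wt.rank ∧
        VX * W * VXᵀ = VX * Wt * VXᵀ + S₁ * Wt * VXᵀ := by
  rintro ⟨Wt, S₁, hWt, hVS, _, heq⟩
  obtain ⟨_, hV, _, _, _⟩ := hsvd
  apply hW
  have h : VXᵀ * (VX * W * VXᵀ) * VX = VXᵀ * (VX * Wt * VXᵀ + S₁ * Wt * VXᵀ) * VX := by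
    rw [heq]
  have hw : W = Wt := by
    calc W = VXᵀ * (VX * W * VXᵀ) * VX := by
            simp [Matrix.mul_assoc, ← Matrix.mul_assoc VXᵀ VX, hV]
      _ = VXᵀ * (VX * Wt * VXᵀ + S₁ * Wt * VXᵀ) * VX := h
      _ = Wt := by
            simp [Matrix.mul_add, Matrix.add_mul, Matrix.mul_assoc,
              ← Matrix.mul_assoc VXᵀ VX, hV, ← Matrix.mul_assoc VXᵀ S₁, hVS]
  rw [hw, hWt]
end
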